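/- arXiv:1806.10896 — 10 statements merged into one kernel-verified Lean document; each statement's English description precedes it below -/
import Mathlib

section
/- For every nonnegative integer n, the sum over k from 0 to n of C_k^2/16^k equals -4 + (5+4n) * binomial(2n+1, n)^2 / 16^n, where C_k is the k-th Catalan number. -/
lemma two_choose_eq (n : ℕ) :
    2 * Nat.choose (2 * n + 1) n = Nat.centralBinom (n + 1) := by
  have h : Nat.centralBinom (n + 1) = Nat.choose (2 * n + 1) n + Nat.choose (2 * n + 1) (n + 1) := by
    have : 2 * (n + 1) = (2 * n + 1) + 1 := by ring
    rw [Nat.centralBinom, this, Nat.choose_succ_succ' (2 * n + 1) n]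
  have hsymm : Nat.choose (2 * n + 1) (n + 1) = Nat.choose (2 * n + 1) n := by
    rw [← Nat.choose_symm (by omega : n + 1 ≤ 2 * n + 1)]
    congr 1; omega
  omega

theorem catalan_sum_d2 (n : ℕ) :
    ∑ k ∈ Finset.range (n + 1), (catalan k : ℚ) ^ 2 / 16 ^ k
      = -4 + (5 + 4 * (n : ℚ)) * (Nat.choose (2 * n + 1) n : ℚ) ^ 2 / 16 ^ n := by
  induction n with
  | zero => simp [catalan_zero]; norm_num
  | succ n ih =>
    rw [Finset.sum_range_succ, ih]
    have hcat : ((n : ℚ) + 2) * (catalan (n + 1) : ℚ) = (Nat.centralBinom (n + 1) : ℚ) := by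
      have h := succ_mul_catalan_eq_centralBinom (n + 1)
      have h' : (((n + 2) * catalan (n + 1) : ℕ) : ℚ) = ((Nat.centralBinom (n + 1) : ℕ) : ℚ) := by
        exact_mod_cast congrArg (Nat.cast : ℕ → ℚ) h
      push_cast at h'
      linear_combination h'
    have hc1 : (2 : ℚ) * (Nat.choose (2 * n + 1) n : ℚ) = (Nat.centralBinom (n + 1) : ℚ) := by
      exact_mod_cast congrArg (Nat.cast : ℕ → ℚ) (two_choose_eq n)
    have hc2 : (2 : ℚ) * (Nat.choose (2 * (n + 1) + 1) (n + 1) : ℚ) = (Nat.centralBinom (n + 2) : ℚ) := by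
      exact_mod_cast congrArg (Nat.cast : ℕ → ℚ) (two_choose_eq (n + 1))
    have hcb : ((n : ℚ) + 2) * (Nat.centralBinom (n + 2) : ℚ)
        = 2 * (2 * (n : ℚ) + 3) * (Nat.centralBinom (n + 1) : ℚ) := by
      have h := Nat.succ_mul_centralBinom_succ (n + 1)
      have h' : (((n + 1 + 1) * Nat.centralBinom (n + 1 + 1) : ℕ) : ℚ)
          = ((2 * (2 * (n + 1) + 1) * Nat.centralBinom (n + 1) : ℕ) : ℚ) := by
        exact_mod_cast congrArg (Nat.cast : ℕ → ℚ) h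
      push_cast at h'
      linear_combination h'
    set B : ℚ := (Nat.centralBinom (n + 1) : ℚ)
    have hcatq : (catalan (n + 1) : ℚ) = B / ((n : ℚ) + 2) := by
      field_simp [← hcat]
      linear_combination hcat
    have hc1q : (Nat.choose (2 * n + 1) n : ℚ) = B / 2 := by linarith
    have hc2q : (Nat.choose (2 * (n + 1) + 1) (n + 1) : ℚ)
        = (2 * (n : ℚ) + 3) * B / ((n : ℚ) + 2) := by
      have h2 : (Nat.centralBinom (n + 2) : ℚ) = 2 * (2 * (n : ℚ) + 3) * B / ((n : ℚ) + 2) := by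
        field_simp at hcb ⊢; linarith
      rw [h2] at hc2
      field_simp at hc2 ⊢; linarith
    rw [hcatq, hc1q, hc2q]
    have hn2 : ((n : ℚ) + 2) ≠ 0 := by positivity
    push_cast
    field_simp
    ring
end

section
/- For every prime p > 2, the sum over k from 0 to (p-1)/2 of C_k/4^k is congruent to 2 - 2*(-1)^((p-1)/2) * p modulo p^2 (as a congruence of p-adic integers, since 4 is invertible mod p). -/
lemma cb_catalan_rec (m : ℕ) :
    Nat.centralBinom (m+1) + 2 * catalan m = 4 * Nat.centralBinom m := by
  have h1 := Nat.succ_mul_centralBinom_succ m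
  have h2 := succ_mul_catalan_eq_centralBinom m
  refine Nat.eq_of_mul_eq_mul_left (show 0 < m + 1 by omega) ?_
  nlinarith [h1, h2]

lemma sum_identity (n : ℕ) :
    2 * (∑ k ∈ Finset.range (n+1), catalan k * 4^(n-k)) + Nat.centralBinom (n+1)
      = 4^(n+1) := by
  induction n with
  | zero =>
    simp [Nat.centralBinom, Nat.choose]
  | succ n ih =>
    rw [Finset.sum_range_succ]
    have hs : ∑ k ∈ Finset.range (n+1), catalan k * 4^(n+1-k)
        = 4 * ∑ k ∈ Finset.range (n+1), catalan k * 4^(n-k) := by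
      rw [Finset.mul_sum]
      refine Finset.sum_congr rfl fun k hk => ?_
      have hk' : k ≤ n := by simpa [Nat.lt_succ_iff] using hk
      have : n + 1 - k = (n - k) + 1 := by omega
      rw [this, pow_succ]
      ring
    rw [hs]
    have := cb_catalan_rec (n+1)
    simp only [Nat.sub_self, pow_zero, mul_one]
    have h4 : (4:ℕ)^(n+1+1) = 4 * 4^(n+1) := by ring
    omega


lemma mul_p_cast (p : ℕ) (a b : ℤ) (h : ((a : ZMod p) = (b : ZMod p))) :
    ((p : ZMod (p^2)) * (a : ZMod (p^2)) = (p : ZMod (p^2)) * (b : ZMod (p^2))) := by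
  have h1 : (p : ℤ) ∣ a - b := by
    rwa [← ZMod.intCast_zmod_eq_zero_iff_dvd, Int.cast_sub, sub_eq_zero]
  have h2 : ((p:ℤ)^2) ∣ (p : ℤ) * (a - b) := by
    obtain ⟨c, hc⟩ := h1; exact ⟨c, by rw [hc]; ring⟩
  have h3 : (((p : ℤ) * (a - b) : ℤ) : ZMod (p^2)) = 0 := by
    rw [ZMod.intCast_zmod_eq_zero_iff_dvd]
    exact_mod_cast h2
  push_cast at h3
  linear_combination h3

lemma choose_sub_one (p : ℕ) (hp : p.Prime) : ∀ k, k ≤ p - 1 →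
    ((Nat.choose (p-1) k : ZMod p) = (-1)^k) := by
  haveI := Fact.mk hp
  intro k
  induction k with
  | zero => simp
  | succ k ih =>
    intro hk1
    have hk : k ≤ p - 1 := by omega
    have h := Nat.choose_succ_right_eq (p-1) k
    have hcast : ((Nat.choose (p-1) (k+1) * (k+1) : ℕ) : ZMod p)
        = ((Nat.choose (p-1) k * (p-1-k) : ℕ) : ZMod p) := by rw [h]
    have hp2 : 2 ≤ p := hp.two_le
    have hsub : ((p-1-k : ℕ) : ZMod p) = -(k+1) := by
      have : p - 1 - k + (k + 1) = p := by omega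
      have h0 : ((p - 1 - k + (k + 1) : ℕ) : ZMod p) = 0 := by
        rw [this]; simp
      push_cast at h0
      linear_combination h0
    push_cast at hcast
    rw [hsub, ih hk] at hcast
    have hne : ((k:ZMod p) + 1) ≠ 0 := by
      have : ((k + 1 : ℕ) : ZMod p) ≠ 0 := by
        rw [Ne, ZMod.natCast_eq_zero_iff]
        intro hdvd
        have := Nat.le_of_dvd (by omega) hdvd
        omega
      push_cast at this; exact this
    field_simp at hcast
    calc ((Nat.choose (p-1) (k+1) : ZMod p)) 
        = (Nat.choose (p-1) (k+1) : ZMod p) * ((k:ZMod p)+1) * ((k:ZMod p)+1)⁻¹ := by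
          field_simp
      _ = (-1)^(k+1) := by rw [hcast]; field_simp; ring

lemma choose_p_eq (p n : ℕ) (hp : p.Prime) (hn : 2 * n + 1 = p) (hn1 : 1 ≤ n) :
    (Nat.choose p n : ZMod (p^2)) = 2 * p * (-1)^n := by
  haveI := Fact.mk hp
  have hps : (p - 1) + 1 = p := by omega
  have hns : (n - 1) + 1 = n := by omega
  have h := Nat.add_one_mul_choose_eq (p-1) (n-1)
  simp only [Nat.succ_eq_add_one, hps, hns] at h
  -- h : p * choose (p-1) (n-1) = choose p n * n
  have hmodp : ((Nat.choose (p-1) (n-1) : ℤ) : ZMod p) = ((2*n*(-1)^n : ℤ) : ZMod p) := by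
    push_cast
    rw [choose_sub_one p hp (n-1) (by omega)]
    have h2n : 2 * (n : ZMod p) = -1 := by
      have : ((2*n + 1 : ℕ) : ZMod p) = 0 := by rw [hn]; simp
      push_cast at this
      linear_combination this
    have hpow : ((-1 : ZMod p))^(n-1) = (-1)^(n+1) := by
      have : n + 1 = (n-1) + 2 := by omega
      rw [this, pow_add]; ring
    rw [hpow]
    rw [show n + 1 = n + 1 from rfl]
    linear_combination (-(-1:ZMod p)^n) * h2n + pow_succ (-1 : ZMod p) n
  have hkey := mul_p_cast p _ _ hmodp
  -- turn h into ZMod p^2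
  have hc : ((p * Nat.choose (p-1) (n-1) : ℕ) : ZMod (p^2)) = ((Nat.choose p n * n : ℕ) : ZMod (p^2)) := by rw [h]
  push_cast at hc hkey
  have hnu : IsUnit ((n : ℕ) : ZMod (p^2)) := by
    haveI : NeZero (p^2) := ⟨pow_ne_zero 2 hp.ne_zero⟩
    rw [ZMod.isUnit_iff_coprime]
    have hcop : Nat.Coprime n p := by
      have : ¬ p ∣ n := fun hd => by have := Nat.le_of_dvd (by omega) hd; omega
      exact (Nat.coprime_comm.mp ((Nat.Prime.coprime_iff_not_dvd hp).mpr this))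
    simpa using hcop.pow_right 2
  refine hnu.mul_left_cancel ?_
  rw [mul_comm ((n:ℕ) : ZMod (p^2)) _]
  calc (Nat.choose p n : ZMod (p^2)) * n = (p : ZMod (p^2)) * (Nat.choose (p-1) (n-1)) := hc.symm
    _ = (p : ZMod (p^2)) * (2*n*(-1)^n) := hkey
    _ = (n : ZMod (p^2)) * (2 * p * (-1)^n) := by ring

theorem catalan_sum_mod_p2 (p : ℕ) (hp : p.Prime) (hp2 : 2 < p) :
    ∑ k ∈ Finset.range ((p - 1) / 2 + 1),
        (catalan k : ZMod (p ^ 2)) * ((4 : ZMod (p ^ 2)) ^ k)⁻¹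
      = 2 - 2 * (-1) ^ ((p - 1) / 2) * (p : ZMod (p ^ 2)) := by
  haveI := Fact.mk hp
  haveI : NeZero (p^2) := ⟨pow_ne_zero 2 hp.ne_zero⟩
  have hodd : p % 2 = 1 := Nat.odd_iff.mp (hp.odd_of_ne_two (by omega))
  set n := (p - 1) / 2 with hn_def
  have hn : 2 * n + 1 = p := by omega
  have hn1 : 1 ≤ n := by omega
  -- units
  have h2cop : Nat.Coprime 2 p := (Nat.coprime_primes Nat.prime_two hp).mpr (by omega)
  have h2u : IsUnit ((2:ℕ) : ZMod (p^2)) := by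
    rw [ZMod.isUnit_iff_coprime]; simpa using h2cop.pow_right 2
  have h4u : IsUnit ((4 : ZMod (p^2))) := by
    have : ((4:ℕ) : ZMod (p^2)) = (4 : ZMod (p^2)) := by norm_num
    rw [← this, ZMod.isUnit_iff_coprime]
    have := Nat.Coprime.pow (k := 2) (l := p) 2 2 h2cop
    simpa using this
  -- centralBinom (n+1) = 2 * choose p n
  have hcb : Nat.centralBinom (n+1) = 2 * Nat.choose p n := by
    have h1 : Nat.centralBinom (n+1) = Nat.choose (p+1) (n+1) := by
      unfold Nat.centralBinom
      congr 1
      omega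
    have h2 : Nat.choose (p+1) (n+1) = Nat.choose p n + Nat.choose p (n+1) := Nat.choose_succ_succ p n
    have h3 : Nat.choose p (n+1) = Nat.choose p n := by
      have := Nat.choose_symm (n := p) (k := n+1) (by omega)
      rw [show p - (n+1) = n by omega] at this; exact this.symm
    omega
  -- cast identity
  have hid := congrArg (fun m : ℕ => (m : ZMod (p^2))) (sum_identity n)
  push_cast at hid
  -- the sum times 4^n
  have hmul : (∑ k ∈ Finset.range (n + 1),
        (catalan k : ZMod (p ^ 2)) * ((4 : ZMod (p ^ 2)) ^ k)⁻¹) * (4 : ZMod (p^2))^n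
      = ∑ k ∈ Finset.range (n + 1), (catalan k : ZMod (p^2)) * (4 : ZMod (p^2))^(n-k) := by
    rw [Finset.sum_mul]
    refine Finset.sum_congr rfl fun k hk => ?_
    have hk' : k ≤ n := by simpa [Nat.lt_succ_iff] using hk
    have hsplit : (4 : ZMod (p^2))^n = 4^k * 4^(n-k) := by
      rw [← pow_add]; congr 1; omega
    rw [mul_assoc, hsplit, ← mul_assoc ((4 : ZMod (p^2))^k)⁻¹,
      ZMod.inv_mul_of_unit _ (h4u.pow k), one_mul]
  -- Fermat: p * 4^n = p
  have hferm : (p : ZMod (p^2)) * (4 : ZMod (p^2))^n = (p : ZMod (p^2)) * 1 := by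
    have hfp : ((4^n : ℤ) : ZMod p) = ((1 : ℤ) : ZMod p) := by
      push_cast
      have h2ne : (2 : ZMod p) ≠ 0 := by
        have : ((2:ℕ) : ZMod p) ≠ 0 := by
          rw [Ne, ZMod.natCast_eq_zero_iff]
          intro h; have := Nat.le_of_dvd (by omega) h; omega
        simpa using this
      calc (4 : ZMod p)^n = (2^2 : ZMod p)^n := by norm_num
        _ = 2^(p-1) := by rw [← pow_mul]; congr 1; omega
        _ = 1 := ZMod.pow_card_sub_one_eq_one h2ne
    have := mul_p_cast p (4^n) 1 hfp
    push_cast at this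
    simpa using this
  -- final cancellation
  have hu : IsUnit ((2 : ZMod (p^2)) * (4 : ZMod (p^2))^n) := by
    have : ((2:ℕ) : ZMod (p^2)) = (2 : ZMod (p^2)) := by norm_num
    exact (this ▸ h2u).mul (h4u.pow n)
  refine hu.mul_right_cancel ?_
  have hch := choose_p_eq p n hp hn hn1
  have hcb2 : ((Nat.centralBinom (n+1) : ℕ) : ZMod (p^2)) = 4 * p * (-1)^n := by
    rw [hcb]; push_cast [hch]; ring
  calc (∑ k ∈ Finset.range (n + 1),
        (catalan k : ZMod (p ^ 2)) * ((4 : ZMod (p ^ 2)) ^ k)⁻¹) * (2 * 4^n)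
      = (∑ k ∈ Finset.range (n + 1),
          (catalan k : ZMod (p ^ 2)) * ((4 : ZMod (p ^ 2)) ^ k)⁻¹ * (4:ZMod (p^2))^n) * 2 := by
        rw [← Finset.sum_mul]; ring
    _ = (∑ k ∈ Finset.range (n + 1), (catalan k : ZMod (p^2)) * (4 : ZMod (p^2))^(n-k)) * 2 := by
        rw [← Finset.sum_mul, hmul]
    _ = 4^(n+1) - 4 * p * (-1)^n := by
        rw [← hcb2]; linear_combination hid
    _ = (2 - 2 * (-1) ^ n * (p : ZMod (p ^ 2))) * (2 * 4^n) := by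
        have : (4:ZMod (p^2))^(n+1) = 4 * 4^n := by ring
        rw [this]
        linear_combination (4 * (-1:ZMod (p^2))^n) * hferm
end

section
/- For every prime p > 2, the sum over k from 0 to (p-1)/2 of C_k^2/16^k is congruent to -4 + 12*p^2 modulo p^3. -/
open Finset Nat

private lemma key_nat (m : ℕ) :
    (∑ k ∈ Finset.range (m+1), catalan k ^ 2 * 16 ^ (m + 1 - k)) + 4 * 16 ^ (m+1)
      = 4 * (4*m+5) * (Nat.centralBinom (m+1))^2 := by
  induction m with
  | zero => simp [Nat.centralBinom]
  | succ m ih =>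
    rw [Finset.sum_range_succ]
    have hstep : ∑ k ∈ Finset.range (m+1), catalan k ^ 2 * 16 ^ (m + 1 + 1 - k)
        = 16 * ∑ k ∈ Finset.range (m+1), catalan k ^ 2 * 16 ^ (m + 1 - k) := by
      rw [Finset.mul_sum]
      refine Finset.sum_congr rfl (fun k hk => ?_)
      have hk' : k ≤ m := Nat.lt_succ_iff.mp (Finset.mem_range.mp hk)
      have : m + 1 + 1 - k = (m + 1 - k) + 1 := by omega
      rw [this, pow_succ]
      ring
    rw [hstep]
    have h1 : (m + 1 + 1) * catalan (m+1) = Nat.centralBinom (m+1) :=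
      succ_mul_catalan_eq_centralBinom (m+1)
    have h2 : (m + 1 + 1) * Nat.centralBinom (m+1+1) = 2 * (2*(m+1) + 1) * Nat.centralBinom (m+1) :=
      Nat.succ_mul_centralBinom_succ (m+1)
    have key : (16:ℕ) * ((∑ k ∈ Finset.range (m+1), catalan k ^ 2 * 16 ^ (m + 1 - k)) + 4 * 16 ^ (m+1))
        = 16 * (4 * (4*m+5) * (Nat.centralBinom (m+1))^2) := by rw [ih]
    have e : (m+1+1-(m+1):ℕ) = 1 := by omega
    rw [e]
    zify at key h1 h2 ⊢
    refine mul_left_cancel₀ (by positivity : ((m:ℤ)+2)^2 ≠ 0) ?_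
    linear_combination ((m:ℤ)+2)^2 * key
      + 16*(((m:ℤ)+2)*(catalan (m+1):ℤ) + (Nat.centralBinom (m+1):ℤ))*h1
      - 4*(4*(m:ℤ)+9)*(((m:ℤ)+2)*(Nat.centralBinom (m+1+1):ℤ) + 2*(2*(m:ℤ)+3)*(Nat.centralBinom (m+1):ℤ))*h2

private lemma half_wilson (p m : ℕ) [Fact p.Prime] (hm : p = 2*m+1) :
    ((m ! : ℕ) : ZMod p)^4 = 1 := by
  have hfac : ∀ n : ℕ, ((n ! : ℕ) : ZMod p) = ∏ i ∈ Ico 1 (n+1), (i : ZMod p) := by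
    intro n
    rw [← Finset.prod_Ico_id_eq_factorial]
    push_cast
    rfl
  have hw : (((p-1)! : ℕ) : ZMod p) = -1 := ZMod.wilsons_lemma p
  have hp1 : p - 1 = 2*m := by omega
  have hsplit : (((2*m) ! : ℕ) : ZMod p)
      = ((m ! : ℕ) : ZMod p) * ∏ i ∈ Ico (m+1) (2*m+1), (i : ZMod p) := by
    rw [hfac, ← Finset.prod_Ico_consecutive (fun i => (i : ZMod p)) (by omega : 1 ≤ m+1) (by omega : m+1 ≤ 2*m+1), hfac]
  have hre : ∏ i ∈ Ico (m+1) (2*m+1), (i : ZMod p) = ∏ j ∈ Ico 1 (m+1), (-(j : ZMod p)) := by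
    refine Finset.prod_nbij' (fun i => 2*m+1-i) (fun j => 2*m+1-j) ?_ ?_ ?_ ?_ ?_
    · intro a ha; simp only [Finset.mem_Ico] at *; omega
    · intro a ha; simp only [Finset.mem_Ico] at *; omega
    · intro a ha; simp only [Finset.mem_Ico] at ha; omega
    · intro a ha; simp only [Finset.mem_Ico] at ha; omega
    · intro a ha
      simp only [Finset.mem_Ico] at ha
      have h1 : ((2*m+1-a : ℕ) : ZMod p) = ((2*m+1 : ℕ) : ZMod p) - (a : ZMod p) := by
        push_cast [Nat.cast_sub (by omega : a ≤ 2*m+1)]; ring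
      rw [h1, ← hm, ZMod.natCast_self]
      ring
  have hneg : ∏ j ∈ Ico 1 (m+1), (-(j : ZMod p)) = (-1)^m * ((m ! : ℕ) : ZMod p) := by
    have h : ∏ j ∈ Ico 1 (m+1), (-(j : ZMod p)) = (∏ _j ∈ Ico 1 (m+1), (-1 : ZMod p)) * ∏ j ∈ Ico 1 (m+1), (j:ZMod p) := by
      rw [← Finset.prod_mul_distrib]
      exact Finset.prod_congr rfl (fun j _ => by ring)
    have hcard : (Ico 1 (m+1)).card = m := by simp
    rw [h, Finset.prod_const, hcard, ← hfac]
  have hfin : ((-1:ZMod p))^m * ((m ! : ℕ) : ZMod p)^2 = -1 := by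
    have h5 : (((p-1)! : ℕ) : ZMod p) = (-1)^m * ((m ! : ℕ) : ZMod p)^2 := by
      rw [hp1, hsplit, hre, hneg]; ring
    rw [← h5, hw]
  have e1 : ((-1:ZMod p)^m * ((m ! : ℕ):ZMod p)^2)^2 = 1 := by rw [hfin]; exact neg_one_sq
  calc ((m ! : ℕ) : ZMod p)^4 = ((-1:ZMod p)^m)^2 * ((m ! : ℕ):ZMod p)^4 := by
        rw [← pow_mul, Even.neg_one_pow ⟨m, by ring⟩, one_mul]
    _ = ((-1:ZMod p)^m * ((m ! : ℕ):ZMod p)^2)^2 := by ring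
    _ = 1 := e1

private lemma sq_mul_congr (p : ℕ) (x y : ℕ) (h : (x : ZMod p) = y) :
    ((p : ZMod (p^3)))^2 * x = ((p : ZMod (p^3)))^2 * y := by
  have hmod : x ≡ y [MOD p] := (ZMod.natCast_eq_natCast_iff x y p).mp h
  obtain ⟨c, hc⟩ : (p:ℤ) ∣ (y:ℤ) - x := hmod.dvd
  have h0 : ((p : ZMod (p^3)))^3 = 0 := by
    have := ZMod.natCast_self (p^3)
    push_cast at this
    exact this
  have hcc : (y : ZMod (p^3)) - (x : ZMod (p^3)) = (p : ZMod (p^3)) * (c : ℤ) := by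
    have := congrArg (fun t : ℤ => (t : ZMod (p^3))) hc
    push_cast at this
    exact this
  linear_combination (-((p:ZMod (p^3)))^2) * hcc - (c : ZMod (p^3)) * h0

private lemma modp_eq (p m : ℕ) [Fact p.Prime] (hp2 : 2 < p) (hm : p = 2*m+1) :
    ((4*(2*p+3)*(p+1)^2*((p-1)!)^2 : ℕ) : ZMod p)
      = ((12*16^(m+1)*((m+1)!)^4 : ℕ) : ZMod p) := by
  have hp0 : ((p:ℕ) : ZMod p) = 0 := ZMod.natCast_self p
  have hw : (((p-1)! : ℕ) : ZMod p) = -1 := ZMod.wilsons_lemma p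
  have h4 : ((m ! : ℕ):ZMod p)^4 = 1 := half_wilson p m hm
  have h2ne : (2 : ZMod p) ≠ 0 := by
    intro h
    have : ((2:ℕ) : ZMod p) = 0 := by exact_mod_cast h
    rw [ZMod.natCast_eq_zero_iff] at this
    have := Nat.le_of_dvd (by norm_num) this
    omega
  have hf : (2 : ZMod p)^(p-1) = 1 := ZMod.pow_card_sub_one_eq_one h2ne
  have hfs : ((m+1)! : ℕ) = (m+1) * m ! := Nat.factorial_succ m
  have hone : ((2*(m+1) : ℕ) : ZMod p) = 1 := by
    rw [show 2*(m+1) = p+1 by omega]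
    push_cast [hp0]
    ring
  have key2 : (16:ZMod p)^(m+1) * ((m+1 : ℕ):ZMod p)^4 = 1 := by
    have e0 : (16:ZMod p)^(m+1) = ((2:ZMod p)^(m+1))^4 := by
      rw [show (16:ZMod p) = 2^4 by norm_num, ← pow_mul, ← pow_mul, Nat.mul_comm]
    have e1 : (2:ZMod p)^(m+1) * ((m+1 : ℕ):ZMod p) = 2^m := by
      have : (2:ZMod p)^(m+1) * ((m+1 : ℕ):ZMod p) = 2^m * ((2*(m+1) : ℕ) : ZMod p) := by
        push_cast
        ring
      rw [this, hone, mul_one]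
    calc (16:ZMod p)^(m+1) * ((m+1 : ℕ):ZMod p)^4
        = ((2:ZMod p)^(m+1) * ((m+1 : ℕ):ZMod p))^4 := by rw [e0, mul_pow]
      _ = ((2:ZMod p)^m)^4 := by rw [e1]
      _ = ((2:ZMod p)^(p-1))^2 := by
          rw [← pow_mul, ← pow_mul]
          congr 1
          omega
      _ = 1 := by rw [hf, one_pow]
  rw [hfs]
  push_cast [hp0]
  calc (4*(2*0+3)*(0+1)^2*((((p-1)!:ℕ)) : ZMod p)^2 : ZMod p)
      = 12 * ((((p-1)!:ℕ)) : ZMod p)^2 := by ring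
    _ = 12 := by rw [hw]; ring
    _ = 12 * ((16:ZMod p)^(m+1) * ((m+1 : ℕ):ZMod p)^4) * ((m ! : ℕ):ZMod p)^4 := by
        rw [key2, h4]; ring
    _ = 12*16^(m+1)*(((m:ZMod p)+1) * ((m ! : ℕ):ZMod p))^4 := by push_cast; ring

theorem catalan_sq_sum_mod_p3 (p : ℕ) (hp : p.Prime) (hp2 : 2 < p) :
    ∑ k ∈ Finset.range ((p - 1) / 2 + 1),
        (catalan k : ZMod (p ^ 3)) ^ 2 * ((16 : ZMod (p ^ 3)) ^ k)⁻¹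
      = -4 + 12 * (p : ZMod (p ^ 3)) ^ 2 := by
  haveI : Fact p.Prime := ⟨hp⟩
  haveI : NeZero (p^3) := ⟨pow_ne_zero 3 (by omega : p ≠ 0)⟩
  have hodd : p % 2 = 1 := by
    rcases hp.eq_two_or_odd with h | h
    · omega
    · exact h
  set m := (p - 1) / 2 with hmdef
  have hm : p = 2*m+1 := by omega
  -- 16 is a unit
  have hnd16 : ¬ p ∣ 16 := by
    intro hd
    have : p ∣ 2 := hp.dvd_of_dvd_pow (show p ∣ 2^4 by norm_num; exact hd)
    have := Nat.le_of_dvd (by norm_num) this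
    omega
  have hcop16 : Nat.Coprime 16 (p^3) :=
    Nat.Coprime.pow_right 3 (Nat.coprime_comm.mp ((hp.coprime_iff_not_dvd).mpr hnd16))
  have hu16 : IsUnit (16 : ZMod (p^3)) := by
    have := (ZMod.isUnit_iff_coprime 16 (p^3)).mpr hcop16
    exact_mod_cast this
  -- factorial (m+1) is a unit
  have hndF : ¬ p ∣ (m+1)! := by
    intro hd
    have := (Nat.Prime.dvd_factorial hp).mp hd
    omega
  have huF : IsUnit (((m+1)! : ℕ) : ZMod (p^3)) :=
    (ZMod.isUnit_iff_coprime _ _).mpr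
      (Nat.Coprime.pow_right 3 (Nat.coprime_comm.mp ((hp.coprime_iff_not_dvd).mpr hndF)))
  -- the main mod p^3 identity for the central binomial coefficient
  have hG : (4:ZMod (p^3))*(4*(m:ZMod (p^3))+5)*((Nat.centralBinom (m+1) : ℕ) : ZMod (p^3))^2
      = 12 * (p:ZMod (p^3))^2 * (16:ZMod (p^3))^(m+1) := by
    have hcb : Nat.centralBinom (m+1) = Nat.choose (p+1) (m+1) := by
      unfold Nat.centralBinom
      rw [show 2*(m+1) = p+1 by omega]
    have hE : Nat.choose (p+1) (m+1) * (m+1)! * (m+1)! = (p+1)! := by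
      have h := Nat.choose_mul_factorial_mul_factorial (show m+1 ≤ p+1 by omega)
      rwa [show p+1-(m+1) = m+1 by omega] at h
    have hpfac : p ! = p * (p-1)! := by
      nth_rewrite 1 [show p = (p-1)+1 by omega]
      rw [Nat.factorial_succ, show (p-1)+1 = p from by omega]
    have hfac2 : (p+1)! = (p+1) * (p * (p-1)!) := by
      rw [Nat.factorial_succ, hpfac]
    have hE2 : (Nat.choose (p+1) (m+1))^2 * ((m+1)!)^4
        = (p+1)^2 * (p^2 * ((p-1)!)^2) := by
      calc (Nat.choose (p+1) (m+1))^2 * ((m+1)!)^4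
          = (Nat.choose (p+1) (m+1) * (m+1)! * (m+1)!) * (Nat.choose (p+1) (m+1) * (m+1)! * (m+1)!) := by ring
        _ = (p+1)! * (p+1)! := by rw [hE]
        _ = (p+1)^2 * (p^2 * ((p-1)!)^2) := by rw [hfac2]; ring
    have hE2Z := congrArg (Nat.cast : ℕ → ZMod (p^3)) hE2
    push_cast at hE2Z
    have haux := sq_mul_congr p _ _ (modp_eq p m hp2 hm)
    push_cast at haux
    have hpm : (p : ZMod (p^3)) = 2*(m : ZMod (p^3))+1 := by
      exact_mod_cast congrArg (Nat.cast : ℕ → ZMod (p^3)) hm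
    rw [hcb]
    refine (huF.pow 4).mul_left_cancel ?_
    linear_combination (4*(4*(m:ZMod (p^3))+5)) * hE2Z + haux
      - 8*((p:ZMod (p^3))+1)^2*(((p-1)! : ℕ):ZMod (p^3))^2 * (p:ZMod (p^3))^2 * hpm
  -- reduce the sum
  refine (hu16.pow (m+1)).mul_left_cancel ?_
  rw [Finset.mul_sum]
  have hterm : ∀ k ∈ Finset.range (m+1),
      (16:ZMod (p^3))^(m+1) * ((catalan k : ZMod (p^3))^2 * ((16:ZMod (p^3))^k)⁻¹)
        = (catalan k : ZMod (p^3))^2 * (16:ZMod (p^3))^(m+1-k) := by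
    intro k hk
    have hk' : k ≤ m + 1 := by
      have := Finset.mem_range.mp hk; omega
    have hiu : IsUnit ((16:ZMod (p^3))^k) := hu16.pow k
    have hone : (16:ZMod (p^3))^k * ((16:ZMod (p^3))^k)⁻¹ = 1 := ZMod.mul_inv_of_unit _ hiu
    have hsplit : (16:ZMod (p^3))^(m+1) = (16:ZMod (p^3))^(m+1-k) * (16:ZMod (p^3))^k := by
      rw [← pow_add]
      congr 1
      omega
    calc (16:ZMod (p^3))^(m+1) * ((catalan k : ZMod (p^3))^2 * ((16:ZMod (p^3))^k)⁻¹)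
        = (catalan k : ZMod (p^3))^2 * (16:ZMod (p^3))^(m+1-k) * ((16:ZMod (p^3))^k * ((16:ZMod (p^3))^k)⁻¹) := by
          rw [hsplit]; ring
      _ = (catalan k : ZMod (p^3))^2 * (16:ZMod (p^3))^(m+1-k) := by rw [hone, mul_one]
  rw [Finset.sum_congr rfl hterm]
  have hkey := congrArg (Nat.cast : ℕ → ZMod (p^3)) (key_nat m)
  push_cast at hkey
  linear_combination hkey + hG
end

section
/- For all nonnegative integers n, k, j with j <= 2k <= 2n, define A(n,k,j) = binomial(n,k)*binomial(n+k,k)*binomial(2k,k+j)*(-4)^(n-k). Then the sum over k from 0 to n of A(n,k,j) equals ((1+(-1)^(n-j))/2) * binomial(n+j, (n+j)/2) * binomial(n-j, (n-j)/2); that is, the sum is 0 if n-j is odd, and equals binomial(n+j,(n+j)/2)*binomial(n-j,(n-j)/2) if n-j is even. -/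
open Finset

namespace Gould634

def f (n j k : ℕ) : ℚ :=
  (n.choose k : ℚ) * ((n + k).choose k : ℚ) * ((2 * k).choose (k + j) : ℚ) * (-4) ^ (n - k)

lemma L (m K : ℕ) : (m + 1) * m.choose K = (m + 1).choose K * (m + 1 - K) := by
  have h1 := Nat.add_one_mul_choose_eq m K
  have h2 := Nat.choose_succ_right_eq (m + 1) K
  omega

lemma hA (n k : ℕ) (hk : k ≤ n + 1) :
    ((n : ℚ) + 2 - k) * ((n + 2).choose k : ℚ) = ((k : ℚ) + 1) * ((n + 2).choose (k + 1) : ℚ) := by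
  have h := Nat.choose_succ_right_eq (n + 2) k
  have := congrArg (Nat.cast : ℕ → ℚ) h
  push_cast [Nat.cast_sub (show k ≤ n + 2 by omega)] at this
  linarith [this]

lemma hB (n k : ℕ) :
    ((n : ℚ) + k + 3) * ((n + k + 2).choose k : ℚ)
      = ((k : ℚ) + 1) * ((n + k + 3).choose (k + 1) : ℚ) := by
  have h := Nat.add_one_mul_choose_eq (n + k + 2) k
  have := congrArg (Nat.cast : ℕ → ℚ) h
  push_cast at this
  linarith [this]

lemma hcNat (k j : ℕ) :
    (2 * k + 2) * (2 * k + 1) * ((2 * k).choose (k + j)) =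
      (2 * k + 2).choose (k + j + 1) * (k + j + 1) * (2 * k + 1 - (k + j)) := by
  have n1 := Nat.add_one_mul_choose_eq (2 * k + 1) (k + j)
  have n2 := Nat.choose_succ_right_eq (2 * k + 1) (k + j)
  have n3 := Nat.add_one_mul_choose_eq (2 * k) (k + j)
  -- (2k+1) * C(2k,k+j) = C(2k+1,k+j) * ((2k+1)-(k+j))
  have n4 : (2 * k + 1) * (2 * k).choose (k + j)
      = (2 * k + 1).choose (k + j) * (2 * k + 1 - (k + j)) := by
    rw [n3, n2]
  calc (2 * k + 2) * (2 * k + 1) * ((2 * k).choose (k + j))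
      = (2 * k + 2) * ((2 * k + 1) * ((2 * k).choose (k + j))) := by ring
    _ = (2 * k + 2) * ((2 * k + 1).choose (k + j)) * (2 * k + 1 - (k + j)) := by
        rw [n4]; ring
    _ = (2 * k + 2).choose (k + j + 1) * (k + j + 1) * (2 * k + 1 - (k + j)) := by
        rw [n1]

/-- ℚ version with true subtraction -/

lemma hcQ (k j : ℕ) :
    ((2 * k + 2) * (2 * k + 1) : ℚ) * ((2 * k).choose (k + j) : ℚ) =
      ((k : ℚ) + 1 + j) * ((k : ℚ) + 1 - j) * ((2 * k + 2).choose (k + 1 + j) : ℚ) := by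
  rcases le_or_gt j (k + 1) with hj | hj
  · have h := hcNat k j
    have e1 : k + j + 1 = k + 1 + j := by omega
    have e2 : 2 * k + 1 - (k + j) = k + 1 - j := by omega
    rw [e1, e2] at h
    have := congrArg (Nat.cast : ℕ → ℚ) h
    push_cast [Nat.cast_sub hj] at this
    linarith [this]
  · have z1 : (2 * k).choose (k + j) = 0 := Nat.choose_eq_zero_of_lt (by omega)
    have z2 : (2 * k + 2).choose (k + 1 + j) = 0 := Nat.choose_eq_zero_of_lt (by omega)
    rw [z1, z2]
    push_cast
    ring

lemma hf (n j k : ℕ) (hk : k ≤ n + 1) :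
    f n j (k + 1) * (16 * ((n : ℚ) + k + 2) * ((n : ℚ) + k + 3)) =
      ((n : ℚ) + 1 - k) * ((n : ℚ) - k) * ((n + 2).choose (k + 1) : ℚ)
        * ((n + k + 3).choose (k + 1) : ℚ) * ((2 * k + 2).choose (k + 1 + j) : ℚ)
        * (-4) ^ (n + 1 - k) := by
  have hnk : n + (k + 1) = n + k + 1 := by omega
  have h2k : 2 * (k + 1) = 2 * k + 2 := by omega
  rcases le_or_gt (k + 1) n with hkn | hkn
  · have c1a := L n (k + 1)
    have c1b := L (n + 1) (k + 1)
    have c2a := L (n + k + 1) (k + 1)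
    have c2b := L (n + k + 2) (k + 1)
    have e1 : n + 1 - (k + 1) = n - k := by omega
    have e2 : n + 1 + 1 - (k + 1) = n + 1 - k := by omega
    have e3 : n + k + 1 + 1 - (k + 1) = n + 1 := by omega
    have e4 : n + k + 2 + 1 - (k + 1) = n + 2 := by omega
    rw [e1] at c1a; rw [e2] at c1b; rw [e3] at c2a; rw [e4] at c2b
    rw [show n + 1 + 1 = n + 2 from by omega] at c1b
    rw [show n + k + 1 + 1 = n + k + 2 from by omega] at c2a
    rw [show n + k + 2 + 1 = n + k + 3 from by omega] at c2b
    have q1a := congrArg (Nat.cast : ℕ → ℚ) c1a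
    have q1b := congrArg (Nat.cast : ℕ → ℚ) c1b
    have q2a := congrArg (Nat.cast : ℕ → ℚ) c2a
    have q2b := congrArg (Nat.cast : ℕ → ℚ) c2b
    push_cast [Nat.cast_sub (show k ≤ n by omega), Nat.cast_sub (show k ≤ n + 1 by omega)]
      at q1a q1b q2a q2b
    have q1 : ((n : ℚ) + 1) * ((n : ℚ) + 2) * (n.choose (k + 1) : ℚ)
        = ((n + 2).choose (k + 1) : ℚ) * ((n : ℚ) + 1 - k) * ((n : ℚ) - k) := by
      linear_combination ((n : ℚ) + 2) * q1a + ((n : ℚ) - k) * q1b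
    have q2 : ((n : ℚ) + k + 2) * ((n : ℚ) + k + 3) * ((n + k + 1).choose (k + 1) : ℚ)
        = ((n + k + 3).choose (k + 1) : ℚ) * (((n : ℚ) + 1) * ((n : ℚ) + 2)) := by
      linear_combination ((n : ℚ) + k + 3) * q2a + ((n : ℚ) + 1) * q2b
    have hp : ((-4 : ℚ)) ^ (n + 1 - k) = 16 * (-4) ^ (n - (k + 1)) := by
      have : n + 1 - k = (n - (k + 1)) + 2 := by omega
      rw [this, pow_add]; ring
    simp only [f, hnk, h2k]
    linear_combination
      (16 * (-4 : ℚ) ^ (n - (k + 1)) * ((2 * k + 2).choose (k + 1 + j) : ℚ)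
        * (n.choose (k + 1) : ℚ)) * q2
      + (16 * (-4 : ℚ) ^ (n - (k + 1)) * ((2 * k + 2).choose (k + 1 + j) : ℚ)
        * ((n + k + 3).choose (k + 1) : ℚ)) * q1
      - (((n : ℚ) + 1 - k) * ((n : ℚ) - k) * ((n + 2).choose (k + 1) : ℚ)
        * ((n + k + 3).choose (k + 1) : ℚ) * ((2 * k + 2).choose (k + 1 + j) : ℚ)) * hp
  · have hz : (n.choose (k + 1) : ℚ) = 0 := by
      rw [Nat.choose_eq_zero_of_lt (by omega)]; norm_num
    have hz2 : ((n : ℚ) + 1 - k) * ((n : ℚ) - k) = 0 := by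
      have : k = n ∨ k = n + 1 := by omega
      rcases this with h | h <;> subst h <;> push_cast <;> ring
    simp only [f, hnk, h2k, hz, hz2]
    ring

def g (n j : ℕ) : ℕ → ℚ
  | 0 => 0
  | k + 1 => (2 * n + 3) * (2 * k + 1) * ((n : ℚ) + 2 - k) / ((n : ℚ) + k + 2) * f (n + 2) j k

lemma g_succ (n j k : ℕ) :
    g n j (k + 1) = (2 * n + 3) * (2 * k + 1) * ((n : ℚ) + 2 - k) / ((n : ℚ) + k + 2)
      * f (n + 2) j k := rfl

lemma step1 (n j k : ℕ) (hk : k ≤ n + 1) :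
    (((n : ℚ) + 2) ^ 2 - (j : ℚ) ^ 2) * f (n + 2) j (k + 1)
      - 16 * (((n : ℚ) + 1) ^ 2 - (j : ℚ) ^ 2) * f n j (k + 1)
    = g n j (k + 2) - g n j (k + 1) := by
  have hkq : (k : ℚ) ≤ n + 1 := by exact_mod_cast hk
  have d1 : ((n : ℚ) + 2 - k) ≠ 0 := by linarith
  have d2 : ((n : ℚ) + k + 2) ≠ 0 := by positivity
  have d3 : ((n : ℚ) + k + 3) ≠ 0 := by positivity
  have d4 : ((2 * k + 2 : ℚ)) ≠ 0 := by positivity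
  have d5 : ((2 * k + 1 : ℚ)) ≠ 0 := by positivity
  have d6 : ((n : ℚ) + (k + 1) + 2) ≠ 0 := by positivity
  -- expressions
  have e1 : f (n + 2) j (k + 1) = ((n + 2).choose (k + 1) : ℚ)
      * ((n + k + 3).choose (k + 1) : ℚ) * ((2 * k + 2).choose (k + 1 + j) : ℚ)
      * (-4) ^ (n + 1 - k) := by
    simp only [f]
    rw [show n + 2 + (k + 1) = n + k + 3 from by omega,
      show 2 * (k + 1) = 2 * k + 2 from by omega,
      show n + 2 - (k + 1) = n + 1 - k from by omega]
  have e2 : f (n + 2) j k = ((n + 2).choose k : ℚ) * ((n + k + 2).choose k : ℚ)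
      * ((2 * k).choose (k + j) : ℚ) * (-4) ^ (n + 2 - k) := by
    simp only [f]
    rw [show n + 2 + k = n + k + 2 from by omega]
  have ha0 : ((n + 2).choose k : ℚ)
      = ((k : ℚ) + 1) * ((n + 2).choose (k + 1) : ℚ) / ((n : ℚ) + 2 - k) := by
    rw [eq_div_iff d1]; linear_combination hA n k hk
  have hb0 : ((n + k + 2).choose k : ℚ)
      = ((k : ℚ) + 1) * ((n + k + 3).choose (k + 1) : ℚ) / ((n : ℚ) + k + 3) := by
    rw [eq_div_iff d3]; linear_combination hB n k
  have hc0 : ((2 * k).choose (k + j) : ℚ)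
      = ((k : ℚ) + 1 + j) * ((k : ℚ) + 1 - j) * ((2 * k + 2).choose (k + 1 + j) : ℚ)
        / ((2 * k + 2) * (2 * k + 1)) := by
    rw [eq_div_iff (by positivity)]; linear_combination hcQ k j
  have hf0 : f n j (k + 1)
      = ((n : ℚ) + 1 - k) * ((n : ℚ) - k) * ((n + 2).choose (k + 1) : ℚ)
        * ((n + k + 3).choose (k + 1) : ℚ) * ((2 * k + 2).choose (k + 1 + j) : ℚ)
        * (-4) ^ (n + 1 - k) / (16 * ((n : ℚ) + k + 2) * ((n : ℚ) + k + 3)) := by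
    rw [eq_div_iff (by positivity)]; linear_combination hf n j k hk
  have hpow : ((-4 : ℚ)) ^ (n + 2 - k) = (-4) * (-4) ^ (n + 1 - k) := by
    rw [show n + 2 - k = (n + 1 - k) + 1 from by omega, pow_succ]; ring
  rw [g_succ n j (k + 1), g_succ n j k, e1, e2, ha0, hb0, hc0, hf0, hpow]
  push_cast
  field_simp
  ring

lemma step0 (n j : ℕ) :
    (((n : ℚ) + 2) ^ 2 - (j : ℚ) ^ 2) * f (n + 2) j 0
      - 16 * (((n : ℚ) + 1) ^ 2 - (j : ℚ) ^ 2) * f n j 0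
    = g n j 1 - g n j 0 := by
  have d2 : ((n : ℚ) + 2) ≠ 0 := by positivity
  rw [g_succ n j 0]
  show _ = _ - (0 : ℚ)
  rcases j with _ | j'
  · simp only [f, Nat.choose_self, Nat.choose_zero_right, Nat.add_zero, Nat.sub_zero]
    norm_num
    rw [show n + 2 = n + 2 from rfl, pow_add]
    field_simp
    ring
  · have hz : Nat.choose 0 (0 + (j' + 1)) = 0 := by
      simp [Nat.choose_eq_zero_of_lt]
    simp [f, hz]

lemma step (n j K : ℕ) (hK : K ≤ n + 2) :
    (((n : ℚ) + 2) ^ 2 - (j : ℚ) ^ 2) * f (n + 2) j K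
      - 16 * (((n : ℚ) + 1) ^ 2 - (j : ℚ) ^ 2) * f n j K
    = g n j (K + 1) - g n j K := by
  rcases K with _ | k
  · exact step0 n j
  · exact step1 n j k (by omega)

lemma recQ (n j : ℕ) :
    (((n : ℚ) + 2) ^ 2 - (j : ℚ) ^ 2) * (∑ k ∈ range (n + 3), f (n + 2) j k)
      = 16 * (((n : ℚ) + 1) ^ 2 - (j : ℚ) ^ 2) * (∑ k ∈ range (n + 3), f n j k) := by
  have tel := Finset.sum_range_sub (g n j) (n + 3)
  have gtop : g n j (n + 3) = 0 := by
    rw [show n + 3 = (n + 2) + 1 from rfl, g_succ]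
    have : ((n : ℚ) + 2 - ((n + 2 : ℕ) : ℚ)) = 0 := by push_cast; ring
    rw [this]
    ring
  have hsum : ∑ k ∈ range (n + 3),
      ((((n : ℚ) + 2) ^ 2 - (j : ℚ) ^ 2) * f (n + 2) j k
        - 16 * (((n : ℚ) + 1) ^ 2 - (j : ℚ) ^ 2) * f n j k)
      = ∑ k ∈ range (n + 3), (g n j (k + 1) - g n j k) := by
    apply Finset.sum_congr rfl
    intro k hk
    exact step n j k (by simp at hk; omega)
  rw [tel, gtop] at hsum
  simp only [g, sub_zero] at hsum
  rw [Finset.sum_sub_distrib] at hsum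
  rw [← Finset.mul_sum, ← Finset.mul_sum] at hsum
  linarith [hsum]

lemma fzero (n j k : ℕ) (h : k < j) : f n j k = 0 := by
  have : (2 * k).choose (k + j) = 0 := Nat.choose_eq_zero_of_lt (by omega)
  simp [f, this]

lemma base0 (j : ℕ) : ∑ k ∈ range (j + 1), f j j k = ((2 * j).choose j : ℚ) := by
  rw [Finset.sum_eq_single_of_mem j (self_mem_range_succ j)]
  · simp only [f, Nat.choose_self, Nat.sub_self, pow_zero]
    rw [show j + j = 2 * j from by omega]
    simp [Nat.choose_self]
  · intro b hb hbj
    exact fzero j j b (by simp at hb; omega)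

lemma base1 (j : ℕ) : ∑ k ∈ range (j + 2), f (j + 1) j k = 0 := by
  rw [Finset.sum_range_succ, Finset.sum_range_succ]
  have h0 : ∑ k ∈ range j, f (j + 1) j k = 0 := by
    apply Finset.sum_eq_zero
    intro k hk
    exact fzero (j + 1) j k (by simp at hk; omega)
  rw [h0]
  -- f (j+1) j j  and  f (j+1) j (j+1)
  have e1 : f (j + 1) j j = ((j : ℚ) + 1) * ((2 * j + 1).choose j : ℚ) * (-4) := by
    simp only [f]
    rw [show j + 1 + j = 2 * j + 1 from by omega, show j + j = 2 * j from by omega,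
      show j + 1 - j = 1 from by omega]
    rw [Nat.choose_succ_self_right]
    simp only [Nat.choose_self, Nat.cast_one, pow_one]
    push_cast
    ring
  have e2 : f (j + 1) j (j + 1) = ((2 * j + 2).choose (j + 1) : ℚ) * (2 * (j : ℚ) + 2) := by
    simp only [f]
    rw [show j + 1 + (j + 1) = 2 * j + 2 from by omega,
      show 2 * (j + 1) = 2 * j + 2 from by omega,
      show j + 1 + j = 2 * j + 1 from by omega,
      show j + 1 - (j + 1) = 0 from by omega]
    rw [Nat.choose_self]
    rw [show 2 * j + 1 = (2 * j + 2) - 1 from by omega,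
      Nat.choose_symm (by omega), Nat.choose_one_right]
    push_cast
    ring
  rw [e1, e2]
  have h := Nat.add_one_mul_choose_eq (2 * j + 1) j
  have hq := congrArg (Nat.cast : ℕ → ℚ) h
  push_cast at hq
  linear_combination (-2 : ℚ) * hq

lemma central (m : ℕ) :
    ((m : ℚ) + 1) * ((2 * m + 2).choose (m + 1) : ℚ)
      = 2 * (2 * (m : ℚ) + 1) * ((2 * m).choose m : ℚ) := by
  have h1 := Nat.add_one_mul_choose_eq (2 * m + 1) m
  have h2 := Nat.add_one_mul_choose_eq (2 * m) m
  have h3 : (2 * m + 1).choose (m + 1) = (2 * m + 1).choose m := by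
    rw [show m + 1 = (2 * m + 1) - m from by omega]
    exact Nat.choose_symm (by omega)
  have q1 := congrArg (Nat.cast : ℕ → ℚ) h1
  have q2 := congrArg (Nat.cast : ℕ → ℚ) h2
  have q3 := congrArg (Nat.cast : ℕ → ℚ) h3
  push_cast at q1 q2 q3
  linear_combination (-1 : ℚ) * q1 + (-2 : ℚ) * q2 + (-2 * ((m : ℚ) + 1)) * q3

def S (n j : ℕ) : ℚ := ∑ k ∈ range (n + 1), f n j k

lemma Sext (n j : ℕ) : ∑ k ∈ range (n + 3), f n j k = S n j := by
  rw [S]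
  symm
  apply Finset.sum_subset (Finset.range_subset_range.2 (by omega))
  intro k hk hk2
  have : n < k := by simp at hk hk2; omega
  simp [f, Nat.choose_eq_zero_of_lt this]

lemma recS (n j : ℕ) :
    (((n : ℚ) + 2) ^ 2 - (j : ℚ) ^ 2) * S (n + 2) j
      = 16 * (((n : ℚ) + 1) ^ 2 - (j : ℚ) ^ 2) * S n j := by
  have h := recQ n j
  rw [Sext n j] at h
  rw [show (n + 3) = (n + 2) + 1 from rfl] at h
  exact h

lemma key : ∀ d j : ℕ, S (j + d) j =
    if d % 2 = 0 then (((2 * j + d).choose (j + d / 2) : ℚ) * ((d.choose (d / 2)) : ℚ))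
    else 0 := by
  intro d
  induction d using Nat.strong_induction_on with
  | _ d ih =>
    intro j
    match d with
    | 0 =>
      rw [if_pos (by norm_num)]
      have h := base0 j
      rw [show j + 0 = j from by omega, S]
      simp only [Nat.zero_div, Nat.add_zero, Nat.choose_zero_right, Nat.cast_one, mul_one]
      exact h
    | 1 =>
      rw [if_neg (by norm_num)]
      have h := base1 j
      rw [S]
      exact h
    | (e + 2) =>
      have IH := ih e (by omega) j
      have hrec := recS (j + e) j
      push_cast at hrec
      rw [show j + (e + 2) = (j + e) + 2 from by omega]
      have hcpos : (0 : ℚ) < ((j : ℚ) + e + 2) ^ 2 - (j : ℚ) ^ 2 := by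
        have h1 : (0 : ℚ) ≤ (j : ℚ) := by positivity
        have h2 : (0 : ℚ) ≤ (e : ℚ) := by positivity
        nlinarith
      have hc : ((j : ℚ) + e + 2) ^ 2 - (j : ℚ) ^ 2 ≠ 0 := ne_of_gt hcpos
      by_cases he : e % 2 = 0
      · obtain ⟨u, hu⟩ : ∃ u, e = 2 * u := ⟨e / 2, by omega⟩
        subst hu
        rw [if_pos (by omega)] at IH
        rw [if_pos (by omega)]
        rw [show (2 * u) / 2 = u from by omega] at IH
        rw [show 2 * j + 2 * u = 2 * (j + u) from by omega] at IH
        rw [show (2 * u + 2) / 2 = u + 1 from by omega]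
        rw [show 2 * j + (2 * u + 2) = 2 * (j + u) + 2 from by omega]
        rw [show j + (u + 1) = (j + u) + 1 from by omega]
        push_cast at hrec hc ⊢
        apply mul_left_cancel₀ hc
        rw [hrec, IH]
        have c1 := central (j + u)
        have c2 := central u
        push_cast at c1 c2
        linear_combination
          (-4 * ((u : ℚ) + 1) * (((2 * u + 2).choose (u + 1) : ℚ))) * c1
          + (-8 * (2 * ((j : ℚ) + u) + 1) * (((2 * (j + u)).choose (j + u) : ℚ))) * c2
      · rw [if_neg he] at IH
        rw [if_neg (by omega)]
        push_cast at hrec hc ⊢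
        apply mul_left_cancel₀ hc
        rw [hrec, IH]
        ring

end Gould634

open Gould634 in
theorem gould_6_34 (n j : ℕ) (hj : j ≤ n) :
    ∑ k ∈ Finset.range (n + 1),
        (Nat.choose n k : ℤ) * (Nat.choose (n + k) k : ℤ)
          * (Nat.choose (2 * k) (k + j) : ℤ) * (-4) ^ (n - k)
      = if (n - j) % 2 = 0 then
          (Nat.choose (n + j) ((n + j) / 2) : ℤ) * (Nat.choose (n - j) ((n - j) / 2) : ℤ)
        else 0 := by
  have hk := key (n - j) j
  rw [show j + (n - j) = n from by omega] at hk
  have hcast : ((∑ k ∈ Finset.range (n + 1),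
      (Nat.choose n k : ℤ) * (Nat.choose (n + k) k : ℤ) * (Nat.choose (2 * k) (k + j) : ℤ)
        * (-4) ^ (n - k) : ℤ) : ℚ) = S n j := by
    rw [S]
    push_cast
    apply Finset.sum_congr rfl
    intro k _
    simp only [f]
  by_cases hpar : (n - j) % 2 = 0
  · rw [if_pos hpar] at hk
    rw [if_pos hpar]
    rw [show 2 * j + (n - j) = n + j from by omega,
        show j + (n - j) / 2 = (n + j) / 2 from by omega] at hk
    have h2 : ((∑ k ∈ Finset.range (n + 1),
        (Nat.choose n k : ℤ) * (Nat.choose (n + k) k : ℤ) * (Nat.choose (2 * k) (k + j) : ℤ)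
          * (-4) ^ (n - k) : ℤ) : ℚ)
        = (((Nat.choose (n + j) ((n + j) / 2) : ℤ) * (Nat.choose (n - j) ((n - j) / 2) : ℤ) : ℤ) : ℚ) := by
      rw [hcast, hk]
      push_cast
      ring
    exact_mod_cast h2
  · rw [if_neg hpar] at hk
    rw [if_neg hpar]
    have h2 : ((∑ k ∈ Finset.range (n + 1),
        (Nat.choose n k : ℤ) * (Nat.choose (n + k) k : ℤ) * (Nat.choose (2 * k) (k + j) : ℤ)
          * (-4) ^ (n - k) : ℤ) : ℚ) = ((0 : ℤ) : ℚ) := by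
      rw [hcast, hk]
      norm_num
    exact_mod_cast h2
end

section
/- For every even nonnegative integer n, the sum over k from 0 to n of binomial(n,k)*binomial(n+k,k)*binomial(2k,k) / ((-4)^k * (k+1)) equals binomial(n, n/2)^2 / 16^(n/2) (as rational numbers). -/
open Finset Nat

def Fq (n k : ℕ) : ℚ :=
  (Nat.choose n k * Nat.choose (n + k) k * Nat.choose (2 * k) k : ℚ) / ((-4) ^ k * (k + 1))

def Gq (n k : ℕ) : ℚ :=
  (-2) * (2 * n + 3) * k ^ 2 *
      (Nat.choose (n + 2) k * Nat.choose (n + k) k * Nat.choose (2 * k) k : ℚ) /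
    ((-4) ^ k * (n + 1) * (n + 2))


lemma cac (i j : ℕ) : ((Nat.choose (i + j) j : ℕ) : ℚ) = (i + j)! / ((i)! * (j)!) := by
  have h := Nat.add_choose_mul_factorial_mul_factorial i j
  have h1 : ((i)! : ℚ) ≠ 0 := Nat.cast_ne_zero.mpr (Nat.factorial_ne_zero _)
  have h2 : ((j)! : ℚ) ≠ 0 := Nat.cast_ne_zero.mpr (Nat.factorial_ne_zero _)
  field_simp
  push_cast [← h]
  ring

set_option maxHeartbeats 3200000 in
lemma key_main (a k : ℕ) :
    ((a+k:ℚ)+2) * ((a+k:ℚ)+3) * Fq (a+k+2) k - (2*(a+k:ℚ)+3) * Fq (a+k+1) k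
      - (a+k:ℚ)*((a+k:ℚ)+1) * Fq (a+k) k = Gq (a+k) (k+1) - Gq (a+k) k := by
  have hA : (((a+k)! : ℕ) : ℚ) ≠ 0 := Nat.cast_ne_zero.mpr (Nat.factorial_ne_zero _)
  have hB : ((a ! : ℕ) : ℚ) ≠ 0 := Nat.cast_ne_zero.mpr (Nat.factorial_ne_zero _)
  have hK : ((k ! : ℕ) : ℚ) ≠ 0 := Nat.cast_ne_zero.mpr (Nat.factorial_ne_zero _)
  have hC : (((a+k+k)! : ℕ) : ℚ) ≠ 0 := Nat.cast_ne_zero.mpr (Nat.factorial_ne_zero _)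
  have hD : (((k+k)! : ℕ) : ℚ) ≠ 0 := Nat.cast_ne_zero.mpr (Nat.factorial_ne_zero _)
  have h1 : ((Nat.choose (a+k) k : ℕ) : ℚ) = ((a+k)!) / (a ! * k !) := cac a k
  have h2 : ((Nat.choose (a+k+1) k : ℕ) : ℚ) = ((a+1)+k)! / ((a+1)! * k !) := by
    rw [show a+k+1 = (a+1)+k from by omega, cac]
  have h3 : ((Nat.choose (a+k+2) k : ℕ) : ℚ) = ((a+2)+k)! / ((a+2)! * k !) := by
    rw [show a+k+2 = (a+2)+k from by omega, cac]
  have h4 : ((Nat.choose (a+k+k) k : ℕ) : ℚ) = ((a+k)+k)! / ((a+k)! * k !) := cac (a+k) k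
  have h5 : ((Nat.choose (a+k+1+k) k : ℕ) : ℚ) = ((a+k+1)+k)! / ((a+k+1)! * k !) :=
    cac (a+k+1) k
  have h6 : ((Nat.choose (a+k+2+k) k : ℕ) : ℚ) = ((a+k+2)+k)! / ((a+k+2)! * k !) :=
    cac (a+k+2) k
  have h7 : ((Nat.choose (2*k) k : ℕ) : ℚ) = (k+k)! / (k ! * k !) := by rw [two_mul, cac]
  have g1 : ((Nat.choose (a+k+2) (k+1) : ℕ) : ℚ) = ((a+1)+(k+1))! / ((a+1)! * (k+1)!) := by
    rw [show a+k+2 = (a+1)+(k+1) from by omega, cac]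
  have g2 : ((Nat.choose (a+k+(k+1)) (k+1) : ℕ) : ℚ) = ((a+k)+(k+1))! / ((a+k)! * (k+1)!) :=
    cac (a+k) (k+1)
  have g3 : ((Nat.choose (2*(k+1)) (k+1) : ℕ) : ℚ) = ((k+1)+(k+1))! / ((k+1)! * (k+1)!) := by
    rw [two_mul, cac]
  have f1 : ((((a+1)+k)! : ℕ) : ℚ) = ((a:ℚ)+k+1) * ((a+k)!) := by
    rw [show (a+1)+k = (a+k)+1 from by omega, Nat.factorial_succ]; push_cast; ring
  have f2 : ((((a+2)+k)! : ℕ) : ℚ) = ((a:ℚ)+k+2)*((a:ℚ)+k+1) * ((a+k)!) := by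
    rw [show (a+2)+k = (a+k)+1+1 from by omega, Nat.factorial_succ, Nat.factorial_succ]
    push_cast; ring
  have f3 : (((a+1)! : ℕ) : ℚ) = ((a:ℚ)+1) * (a !) := by
    rw [Nat.factorial_succ]; push_cast; ring
  have f4 : (((a+2)! : ℕ) : ℚ) = ((a:ℚ)+2)*((a:ℚ)+1) * (a !) := by
    rw [Nat.factorial_succ, Nat.factorial_succ]; push_cast; ring
  have f5 : ((((a+k+1)+k)! : ℕ) : ℚ) = ((a:ℚ)+2*k+1) * ((a+k+k)!) := by
    rw [show (a+k+1)+k = (a+k+k)+1 from by omega, Nat.factorial_succ]; push_cast; ring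
  have f5' : (((a+k+1)! : ℕ) : ℚ) = ((a:ℚ)+k+1) * ((a+k)!) := by
    rw [Nat.factorial_succ]; push_cast; ring
  have f6 : ((((a+k+2)+k)! : ℕ) : ℚ) = ((a:ℚ)+2*k+2)*((a:ℚ)+2*k+1) * ((a+k+k)!) := by
    rw [show (a+k+2)+k = (a+k+k)+1+1 from by omega, Nat.factorial_succ, Nat.factorial_succ]
    push_cast; ring
  have f6' : (((a+k+2)! : ℕ) : ℚ) = ((a:ℚ)+k+2)*((a:ℚ)+k+1) * ((a+k)!) := by
    rw [Nat.factorial_succ, Nat.factorial_succ]; push_cast; ring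
  have f7 : ((((a+1)+(k+1))! : ℕ) : ℚ) = ((a:ℚ)+k+2)*((a:ℚ)+k+1) * ((a+k)!) := by
    rw [show (a+1)+(k+1) = (a+k)+1+1 from by omega, Nat.factorial_succ, Nat.factorial_succ]
    push_cast; ring
  have f8 : (((k+1)! : ℕ) : ℚ) = ((k:ℚ)+1) * (k !) := by
    rw [Nat.factorial_succ]; push_cast; ring
  have f9 : ((((a+k)+(k+1))! : ℕ) : ℚ) = ((a:ℚ)+2*k+1) * ((a+k+k)!) := by
    rw [show (a+k)+(k+1) = (a+k+k)+1 from by omega, Nat.factorial_succ]; push_cast; ring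
  have f10 : ((((k+1)+(k+1))! : ℕ) : ℚ) = (2*(k:ℚ)+2)*(2*(k:ℚ)+1) * ((k+k)!) := by
    rw [show (k+1)+(k+1) = (k+k)+1+1 from by omega, Nat.factorial_succ, Nat.factorial_succ]
    push_cast; ring
  simp only [Fq, Gq, h3, h6, h7, h2, h5, h1, h4, g1, g2, g3]
  rw [f1, f2, f3, f4, f5, f5', f6, f6', f7, f8, f9, f10]
  have hm4 : ((-4 : ℚ)) ^ k ≠ 0 := pow_ne_zero _ (by norm_num)
  have hk1 : ((k:ℚ)+1) ≠ 0 := by positivity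
  have hk2 : ((k:ℚ)+2) ≠ 0 := by positivity
  have hak1 : ((a:ℚ)+(k:ℚ)+1) ≠ 0 := by positivity
  have hak2 : ((a:ℚ)+(k:ℚ)+2) ≠ 0 := by positivity
  push_cast
  field_simp
  ring

set_option maxHeartbeats 1600000 in
lemma key_b1 (n : ℕ) :
    ((n:ℚ)+2) * ((n:ℚ)+3) * Fq (n+2) (n+1) - (2*(n:ℚ)+3) * Fq (n+1) (n+1)
      - (n:ℚ)*((n:ℚ)+1) * Fq n (n+1) = Gq n (n+2) - Gq n (n+1) := by
  have hN : ((n ! : ℕ) : ℚ) ≠ 0 := Nat.cast_ne_zero.mpr (Nat.factorial_ne_zero _)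
  have hM : (((n+(n+1))! : ℕ) : ℚ) ≠ 0 := Nat.cast_ne_zero.mpr (Nat.factorial_ne_zero _)
  have b0 : Nat.choose n (n+1) = 0 := Nat.choose_eq_zero_of_lt (by omega)
  have b1 : ((Nat.choose (n+2) (n+1) : ℕ) : ℚ) = (1+(n+1))! / ((1)! * ((n+1))!) := by
    rw [show n+2 = 1+(n+1) from by omega, cac]
  have b2 : ((Nat.choose (n+2+(n+1)) (n+1) : ℕ) : ℚ) = ((n+2)+(n+1))! / ((n+2)! * (n+1)!) :=
    cac (n+2) (n+1)
  have b3 : ((Nat.choose (2*(n+1)) (n+1) : ℕ) : ℚ) = ((n+1)+(n+1))! / ((n+1)! * (n+1)!) := by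
    rw [two_mul, cac]
  have b5 : ((Nat.choose (n+1+(n+1)) (n+1) : ℕ) : ℚ) = ((n+1)+(n+1))! / ((n+1)! * (n+1)!) :=
    cac (n+1) (n+1)
  have b7 : ((Nat.choose (n+(n+2)) (n+2) : ℕ) : ℚ) = (n+(n+2))! / (n ! * (n+2)!) :=
    cac n (n+2)
  have b9 : ((Nat.choose (n+(n+1)) (n+1) : ℕ) : ℚ) = (n+(n+1))! / (n ! * (n+1)!) :=
    cac n (n+1)
  have b8 : ((Nat.choose (2*(n+2)) (n+2) : ℕ) : ℚ) = ((n+2)+(n+2))! / ((n+2)! * (n+2)!) := by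
    rw [two_mul, cac]
  have e0 : (((1:ℕ))! : ℚ) = 1 := by norm_num
  have e1 : (((n+1)! : ℕ) : ℚ) = ((n:ℚ)+1) * (n !) := by
    rw [Nat.factorial_succ]; push_cast; ring
  have e2 : (((n+2)! : ℕ) : ℚ) = ((n:ℚ)+2)*((n:ℚ)+1) * (n !) := by
    rw [Nat.factorial_succ, Nat.factorial_succ]; push_cast; ring
  have e3 : ((((n+2)+(n+1))! : ℕ) : ℚ) = (2*(n:ℚ)+3)*(2*(n:ℚ)+2) * ((n+(n+1))!) := by
    rw [show (n+2)+(n+1) = (n+(n+1))+1+1 from by omega, Nat.factorial_succ, Nat.factorial_succ]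
    push_cast; ring
  have e4 : (((1+(n+1))! : ℕ) : ℚ) = ((n:ℚ)+2)*((n:ℚ)+1) * (n !) := by
    rw [show 1+(n+1) = n+1+1 from by omega, Nat.factorial_succ, Nat.factorial_succ]
    push_cast; ring
  have e5 : ((((n+1)+(n+1))! : ℕ) : ℚ) = (2*(n:ℚ)+2) * ((n+(n+1))!) := by
    rw [show (n+1)+(n+1) = (n+(n+1))+1 from by omega, Nat.factorial_succ]; push_cast; ring
  have e6 : (((n+(n+2))! : ℕ) : ℚ) = (2*(n:ℚ)+2) * ((n+(n+1))!) := by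
    rw [show n+(n+2) = (n+(n+1))+1 from by omega, Nat.factorial_succ]; push_cast; ring
  have e7 : ((((n+2)+(n+2))! : ℕ) : ℚ)
      = (2*(n:ℚ)+4)*(2*(n:ℚ)+3)*(2*(n:ℚ)+2) * ((n+(n+1))!) := by
    rw [show (n+2)+(n+2) = (n+(n+1))+1+1+1 from by omega, Nat.factorial_succ,
      Nat.factorial_succ, Nat.factorial_succ]
    push_cast; ring
  simp only [Fq, Gq, b0, Nat.choose_self, b1, b2, b3, b5, b7, b9, b8]
  rw [e4, e3, e5, e7, e6, e2, e1, e0]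
  have hm4 : ((-4 : ℚ)) ^ (n+1) ≠ 0 := pow_ne_zero _ (by norm_num)
  have hk1 : ((n:ℚ)+1) ≠ 0 := by positivity
  have hk2 : ((n:ℚ)+2) ≠ 0 := by positivity
  have hk3 : ((n:ℚ)+3) ≠ 0 := by positivity
  push_cast
  field_simp
  ring

set_option maxHeartbeats 1600000 in
lemma key_b2 (n : ℕ) :
    ((n:ℚ)+2) * ((n:ℚ)+3) * Fq (n+2) (n+2) - (2*(n:ℚ)+3) * Fq (n+1) (n+2)
      - (n:ℚ)*((n:ℚ)+1) * Fq n (n+2) = Gq n (n+3) - Gq n (n+2) := by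
  have hN : ((n ! : ℕ) : ℚ) ≠ 0 := Nat.cast_ne_zero.mpr (Nat.factorial_ne_zero _)
  have hM : (((n+(n+2))! : ℕ) : ℚ) ≠ 0 := Nat.cast_ne_zero.mpr (Nat.factorial_ne_zero _)
  have b0 : Nat.choose n (n+2) = 0 := Nat.choose_eq_zero_of_lt (by omega)
  have b0' : Nat.choose (n+1) (n+2) = 0 := Nat.choose_eq_zero_of_lt (by omega)
  have b0'' : Nat.choose (n+2) (n+3) = 0 := Nat.choose_eq_zero_of_lt (by omega)
  have b2 : ((Nat.choose (n+2+(n+2)) (n+2) : ℕ) : ℚ) = ((n+2)+(n+2))! / ((n+2)! * (n+2)!) :=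
    cac (n+2) (n+2)
  have b3 : ((Nat.choose (2*(n+2)) (n+2) : ℕ) : ℚ) = ((n+2)+(n+2))! / ((n+2)! * (n+2)!) := by
    rw [two_mul, cac]
  have b7 : ((Nat.choose (n+(n+2)) (n+2) : ℕ) : ℚ) = (n+(n+2))! / (n ! * (n+2)!) :=
    cac n (n+2)
  have e2 : (((n+2)! : ℕ) : ℚ) = ((n:ℚ)+2)*((n:ℚ)+1) * (n !) := by
    rw [Nat.factorial_succ, Nat.factorial_succ]; push_cast; ring
  have e7 : ((((n+2)+(n+2))! : ℕ) : ℚ) = (2*(n:ℚ)+4)*(2*(n:ℚ)+3) * ((n+(n+2))!) := by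
    rw [show (n+2)+(n+2) = (n+(n+2))+1+1 from by omega, Nat.factorial_succ, Nat.factorial_succ]
    push_cast; ring
  simp only [Fq, Gq, b0, b0', b0'', Nat.choose_self, b2, b3, b7]
  rw [e7, e2]
  have hm4 : ((-4 : ℚ)) ^ (n+2) ≠ 0 := pow_ne_zero _ (by norm_num)
  have hk1 : ((n:ℚ)+1) ≠ 0 := by positivity
  have hk2 : ((n:ℚ)+2) ≠ 0 := by positivity
  have hk3 : ((n:ℚ)+3) ≠ 0 := by positivity
  push_cast
  field_simp
  ring

lemma Fq_zero {n k : ℕ} (h : n < k) : Fq n k = 0 := by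
  simp [Fq, Nat.choose_eq_zero_of_lt h]

lemma Gq_zero {n k : ℕ} (h : n + 2 < k) : Gq n k = 0 := by
  simp [Gq, Nat.choose_eq_zero_of_lt h]

lemma Gq_zero' (n : ℕ) : Gq n 0 = 0 := by simp [Gq]

lemma key (n k : ℕ) :
    ((n:ℚ)+2) * ((n:ℚ)+3) * Fq (n+2) k - (2*(n:ℚ)+3) * Fq (n+1) k
      - (n:ℚ)*((n:ℚ)+1) * Fq n k = Gq n (k+1) - Gq n k := by
  rcases le_or_gt k n with h | h
  · obtain ⟨a, rfl⟩ : ∃ a, n = a + k := ⟨n - k, by omega⟩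
    have h' := key_main a k
    push_cast at h' ⊢
    linarith [h']
  rcases eq_or_lt_of_le (Nat.succ_le_of_lt h) with h1 | h1
  · rw [← h1]; rw [← h1] at *; exact key_b1 n
  rcases eq_or_lt_of_le (Nat.succ_le_of_lt h1) with h2 | h2
  · rw [← h2]; exact key_b2 n
  · rw [Fq_zero (by omega), Fq_zero (by omega), Fq_zero (by omega),
      Gq_zero (by omega), Gq_zero (by omega)]
    ring

def S (n : ℕ) : ℚ := ∑ k ∈ Finset.range (n + 1), Fq n k

lemma S_ext (n N : ℕ) (h : n + 1 ≤ N) : S n = ∑ k ∈ Finset.range N, Fq n k := by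
  rw [S]
  apply Finset.sum_subset (Finset.range_subset_range.mpr h)
  intro k _ hk
  simp only [Finset.mem_range, not_lt] at hk
  exact Fq_zero (by omega)

lemma recurrence (n : ℕ) :
    ((n:ℚ)+2) * ((n:ℚ)+3) * S (n+2) = (2*(n:ℚ)+3) * S (n+1) + (n:ℚ)*((n:ℚ)+1) * S n := by
  have h0 : ∑ k ∈ Finset.range (n+3),
      (((n:ℚ)+2) * ((n:ℚ)+3) * Fq (n+2) k - (2*(n:ℚ)+3) * Fq (n+1) k
        - (n:ℚ)*((n:ℚ)+1) * Fq n k) = Gq n (n+3) - Gq n 0 := by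
    simp_rw [key n]
    exact Finset.sum_range_sub (fun k => Gq n k) (n+3)
  rw [Gq_zero (by omega), Gq_zero' n, sub_zero] at h0
  simp_rw [Finset.sum_sub_distrib, ← Finset.mul_sum] at h0
  rw [← S_ext (n+2) (n+3) (by omega), ← S_ext (n+1) (n+3) (by omega),
    ← S_ext n (n+3) (by omega)] at h0
  linarith [h0]

def cB (m : ℕ) : ℚ := (Nat.centralBinom m : ℚ) / 4 ^ m

lemma cB_succ (m : ℕ) : 2 * ((m:ℚ)+1) * cB (m+1) = (2*(m:ℚ)+1) * cB m := by
  have h := Nat.succ_mul_centralBinom_succ m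
  have h4 : ((4:ℚ))^m ≠ 0 := by positivity
  have h' : ((m:ℚ)+1) * (Nat.centralBinom (m+1)) = 2*(2*(m:ℚ)+1) * (Nat.centralBinom m) := by
    exact_mod_cast h
  rw [cB, cB, pow_succ, ← mul_div_assoc, ← mul_div_assoc,
    div_eq_div_iff (by positivity) (by positivity)]
  linear_combination 2*(4:ℚ)^m * h'

lemma closed (m : ℕ) : S (2*m) = cB m ^ 2 ∧ S (2*m+1) = cB m * cB (m+1) := by
  induction m with
  | zero =>
    constructor <;>
      norm_num [S, Finset.sum_range_succ, Fq, cB, Nat.centralBinom]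
  | succ m ih =>
    obtain ⟨ih0, ih1⟩ := ih
    have hc := cB_succ m
    have hc2 := cB_succ (m+1)
    have r0 := recurrence (2*m)
    rw [ih0, ih1] at r0
    push_cast at r0 hc hc2
    have hD : (2*(m:ℚ)+2)*(2*(m:ℚ)+3) ≠ 0 := by positivity
    have aux : (2*(m:ℚ)+2)*(2*(m:ℚ)+3) * S (2*m+2)
        = (2*(m:ℚ)+2)*(2*(m:ℚ)+3) * (cB (m+1) ^ 2) := by
      linear_combination r0 - ((2*(m:ℚ)+3)*cB (m+1) + 2*(m:ℚ)*cB m) * hc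
    have hS2 : S (2*m+2) = cB (m+1) ^ 2 := mul_left_cancel₀ hD aux
    have r1 := recurrence (2*m+1)
    rw [show 2*m+1+2 = 2*m+3 from by ring, show 2*m+1+1 = 2*m+2 from by ring] at r1
    rw [ih1, hS2] at r1
    push_cast at r1
    have hE : (2*(m:ℚ)+3)*(2*(m:ℚ)+4) ≠ 0 := by positivity
    have aux2 : (2*(m:ℚ)+3)*(2*(m:ℚ)+4) * S (2*m+3)
        = (2*(m:ℚ)+3)*(2*(m:ℚ)+4) * (cB (m+1) * cB (m+2)) := by
      linear_combination r1 - (2*(m:ℚ)+2)*cB (m+1) * hc - (2*(m:ℚ)+3)*cB (m+1) * hc2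
    have hS3 : S (2*m+3) = cB (m+1) * cB (m+2) := mul_left_cancel₀ hE aux2
    constructor
    · rw [show 2*(m+1) = 2*m+2 from by ring]; exact hS2
    · rw [show 2*(m+1)+1 = 2*m+3 from by ring]; exact hS3

theorem id1_even (n : ℕ) (hn : Even n) :
    ∑ k ∈ Finset.range (n + 1),
        (Nat.choose n k * Nat.choose (n + k) k * Nat.choose (2 * k) k : ℚ)
          / ((-4) ^ k * (k + 1))
      = (Nat.choose n (n / 2) : ℚ) ^ 2 / 16 ^ (n / 2) := by
  obtain ⟨m, rfl⟩ : ∃ m, n = 2*m := by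
    obtain ⟨r, hr⟩ := hn; exact ⟨r, by omega⟩
  have hd : 2*m/2 = m := by omega
  rw [hd]
  have h := (closed m).1
  have hL : ∑ k ∈ Finset.range (2*m + 1),
      (Nat.choose (2*m) k * Nat.choose (2*m + k) k * Nat.choose (2 * k) k : ℚ)
        / ((-4) ^ k * (k + 1)) = S (2*m) := rfl
  rw [hL, h, cB, div_pow, Nat.centralBinom]
  congr 1
  rw [← pow_mul, mul_comm m 2, pow_mul]
  norm_num
end

section
/- For every odd positive integer n, the sum over k from 0 to n of binomial(n,k)*binomial(n+k,k)*binomial(2k,k) / ((-4)^k * (k+1)^3) equals -2/(n(n+1)) + ((4n^4+8n^3+3n^2-n+1)/(n(n+1)^3)) * binomial(n-1,(n-1)/2)^2 / 16^((n-1)/2) (as rational numbers). -/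
open Finset

def Ff (n k : ℕ) : ℚ :=
  (Nat.choose n k * Nat.choose (n + k) k * Nat.choose (2 * k) k : ℚ)
    / ((-4) ^ k * (k + 1) ^ 3)

def Gg (n k : ℕ) : ℚ :=
  (Nat.choose (n + 2) k * Nat.choose (n + k) k * Nat.choose (2 * k) k : ℚ)
    / ((-4) ^ k * ((n : ℚ) + 1) * ((n : ℚ) + 2))

def Ss (n : ℕ) : ℚ := ∑ k ∈ Finset.range (n + 1), Ff n k

-- (choose n k) * (n+1) = (choose (n+1) k) * (n+1-k)  in ℚ, all k
lemma rel1 (n k : ℕ) :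
    (Nat.choose n k : ℚ) * ((n : ℚ) + 1) = (Nat.choose (n + 1) k : ℚ) * ((n : ℚ) + 1 - k) := by
  rcases le_or_gt k (n + 1) with h | h
  · have h0 := Nat.choose_mul_succ_eq n k
    have hc : ((n + 1 - k : ℕ) : ℚ) = (n : ℚ) + 1 - k := by
      push_cast [Nat.cast_sub h]; ring
    have := congrArg (fun x : ℕ => (x : ℚ)) h0
    push_cast at this
    rw [← hc] at *
    push_cast
    linarith [this]
  · rw [Nat.choose_eq_zero_of_lt (by omega), Nat.choose_eq_zero_of_lt (by omega)]
    simp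

-- (choose n (k+1)) * (k+1) = (choose n k) * (n-k)  in ℚ, all k
lemma rel2 (n k : ℕ) :
    (Nat.choose n (k + 1) : ℚ) * ((k : ℚ) + 1) = (Nat.choose n k : ℚ) * ((n : ℚ) - k) := by
  rcases le_or_gt k n with h | h
  · have h0 := Nat.choose_succ_right_eq n k
    have hc : ((n - k : ℕ) : ℚ) = (n : ℚ) - k := by push_cast [Nat.cast_sub h]; ring
    have := congrArg (fun x : ℕ => (x : ℚ)) h0
    push_cast at this
    rw [← hc]
    push_cast
    linarith [this]
  · rw [Nat.choose_eq_zero_of_lt (by omega), Nat.choose_eq_zero_of_lt (by omega)]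
    simp

-- central binomial: (k+1) * choose (2k+2) (k+1) = 2*(2k+1)* choose (2k) k
lemma rel3 (k : ℕ) :
    (Nat.choose (2 * k + 2) (k + 1) : ℚ) * ((k : ℚ) + 1)
      = 2 * (2 * (k : ℚ) + 1) * (Nat.choose (2 * k) k : ℚ) := by
  have h0 := Nat.succ_mul_centralBinom_succ k
  simp only [Nat.centralBinom] at h0
  have h1 : 2 * (k + 1) = 2 * k + 2 := by ring
  rw [h1] at h0
  have := congrArg (fun x : ℕ => (x : ℚ)) h0
  push_cast at this
  linarith [this]

lemma cert (n k : ℕ) :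
    (n : ℚ) ^ 3 * ((n : ℚ) + 2) * Ff n k
      + (2 * (n : ℚ) + 3) * (3 * (n : ℚ) ^ 2 + 9 * (n : ℚ) + 5) * Ff (n + 1) k
      - ((n : ℚ) + 1) * ((n : ℚ) + 3) ^ 3 * Ff (n + 2) k
    = 2 * (2 * (n : ℚ) + 3) * ((n : ℚ) + 1) * ((n : ℚ) + 2) * (Gg n (k + 1) - Gg n k) := by
  have hk1 : ((k : ℚ) + 1) ≠ 0 := by positivity
  have hn1 : ((n : ℚ) + 1) ≠ 0 := by positivity
  have hn2 : ((n : ℚ) + 2) ≠ 0 := by positivity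
  have h4 : ((-4 : ℚ)) ^ k ≠ 0 := by
    apply pow_ne_zero; norm_num
  -- downward expansions of the first binomials
  have hB0 : (Nat.choose n k : ℚ) = (Nat.choose (n + 1) k : ℚ) * ((n : ℚ) + 1 - k) / ((n : ℚ) + 1) := by
    rw [eq_div_iff hn1]; exact rel1 n k
  have hB1 : (Nat.choose (n + 1) k : ℚ) = (Nat.choose (n + 2) k : ℚ) * ((n : ℚ) + 2 - k) / ((n : ℚ) + 2) := by
    rw [eq_div_iff hn2]
    have := rel1 (n + 1) k
    push_cast at this ⊢
    linarith [this]
  -- upward expansions of the middle binomials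
  have hM1 : (Nat.choose (n + 1 + k) k : ℚ) = ((n : ℚ) + 1 + k) * (Nat.choose (n + k) k : ℚ) / ((n : ℚ) + 1) := by
    rw [eq_div_iff hn1]
    have := rel1 (n + k) k
    rw [show n + k + 1 = n + 1 + k from by omega] at this
    push_cast at this ⊢
    linarith [this]
  have hM2 : (Nat.choose (n + 2 + k) k : ℚ) = ((n : ℚ) + 2 + k) * (Nat.choose (n + 1 + k) k : ℚ) / ((n : ℚ) + 2) := by
    rw [eq_div_iff hn2]
    have := rel1 (n + 1 + k) k
    rw [show n + 1 + k + 1 = n + 2 + k from by omega] at this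
    push_cast at this ⊢
    linarith [this]
  -- the k+1 column expansions
  have hA1 : (Nat.choose (n + 2) (k + 1) : ℚ) = (Nat.choose (n + 2) k : ℚ) * ((n : ℚ) + 2 - k) / ((k : ℚ) + 1) := by
    rw [eq_div_iff hk1]
    have := rel2 (n + 2) k
    push_cast at this ⊢
    linarith [this]
  have hM1' : (Nat.choose (n + 1 + k) (k + 1) : ℚ) = ((n : ℚ) + 1) * (Nat.choose (n + 1 + k) k : ℚ) / ((k : ℚ) + 1) := by
    rw [eq_div_iff hk1]
    have := rel2 (n + 1 + k) k
    push_cast at this ⊢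
    linarith [this]
  have hC1 : (Nat.choose (2 * (k + 1)) (k + 1) : ℚ) = 2 * (2 * (k : ℚ) + 1) * (Nat.choose (2 * k) k : ℚ) / ((k : ℚ) + 1) := by
    rw [eq_div_iff hk1]
    have := rel3 k
    have h1 : 2 * (k + 1) = 2 * k + 2 := by ring
    rw [h1]
    linarith [this]
  simp only [Ff, Gg]
  rw [show n + (k + 1) = n + 1 + k from by omega, show n + 1 + k = n + 1 + k from rfl,
      show n + 2 + k = n + 2 + k from rfl]
  rw [hC1, hM1', hA1, hM2, hM1, hB0, hB1]
  push_cast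
  field_simp
  ring

lemma Ff_zero {n k : ℕ} (h : n < k) : Ff n k = 0 := by
  simp [Ff, Nat.choose_eq_zero_of_lt h]

lemma Srec (n : ℕ) :
    (n : ℚ) ^ 3 * ((n : ℚ) + 2) * Ss n
      + (2 * (n : ℚ) + 3) * (3 * (n : ℚ) ^ 2 + 9 * (n : ℚ) + 5) * Ss (n + 1)
      - ((n : ℚ) + 1) * ((n : ℚ) + 3) ^ 3 * Ss (n + 2)
    = -2 * (2 * (n : ℚ) + 3) := by
  have hn1 : ((n : ℚ) + 1) ≠ 0 := by positivity
  have hn2 : ((n : ℚ) + 2) ≠ 0 := by positivity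
  have e1 : ∑ k ∈ range (n + 3), Ff n k = Ss n := by
    rw [show n + 3 = (n + 1) + 1 + 1 from rfl, Finset.sum_range_succ, Finset.sum_range_succ,
      Ff_zero (by omega), Ff_zero (by omega)]
    simp [Ss]
  have e2 : ∑ k ∈ range (n + 3), Ff (n + 1) k = Ss (n + 1) := by
    rw [show n + 3 = (n + 2) + 1 from rfl, Finset.sum_range_succ, Ff_zero (by omega)]
    simp [Ss]
  have e3 : ∑ k ∈ range (n + 3), Ff (n + 2) k = Ss (n + 2) := rfl
  have key : ∑ k ∈ range (n + 3),
      ((n : ℚ) ^ 3 * ((n : ℚ) + 2) * Ff n k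
        + (2 * (n : ℚ) + 3) * (3 * (n : ℚ) ^ 2 + 9 * (n : ℚ) + 5) * Ff (n + 1) k
        - ((n : ℚ) + 1) * ((n : ℚ) + 3) ^ 3 * Ff (n + 2) k)
      = ∑ k ∈ range (n + 3),
          2 * (2 * (n : ℚ) + 3) * ((n : ℚ) + 1) * ((n : ℚ) + 2) * (Gg n (k + 1) - Gg n k) :=
    Finset.sum_congr rfl fun k _ => cert n k
  rw [Finset.sum_sub_distrib, Finset.sum_add_distrib, ← Finset.mul_sum, ← Finset.mul_sum,
    ← Finset.mul_sum, ← Finset.mul_sum, Finset.sum_range_sub (fun k => Gg n k)] at key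
  rw [e1, e2, e3] at key
  have hG0 : Gg n 0 = 1 / (((n : ℚ) + 1) * ((n : ℚ) + 2)) := by
    simp [Gg]
  have hGtop : Gg n (n + 3) = 0 := by
    simp [Gg, Nat.choose_eq_zero_of_lt (show n + 2 < n + 3 from by omega)]
  rw [hG0, hGtop] at key
  rw [key]
  field_simp
  ring

def cc (m : ℕ) : ℚ := (Nat.choose (2 * m) m : ℚ) / 4 ^ m

lemma ccrel (m : ℕ) : cc (m + 1) * (2 * (m : ℚ) + 2) = cc m * (2 * (m : ℚ) + 1) := by
  have h := rel3 m
  have h4 : ((4 : ℚ)) ^ m ≠ 0 := by positivity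
  simp only [cc]
  rw [show 2 * (m + 1) = 2 * m + 2 from by ring]
  field_simp
  push_cast at h ⊢
  linear_combination (2 * (4:ℚ) ^ m) * h

lemma Ss_one : Ss 1 = 7 / 8 := by
  simp [Ss, Ff, Finset.sum_range_succ]
  norm_num

lemma Ss_two : Ss 2 = 17 / 24 := by
  simp [Ss, Ff, Finset.sum_range_succ]
  norm_num [Nat.choose]

set_option maxHeartbeats 2000000 in
lemma closed_s10 (m : ℕ) :
    Ss (2 * m + 1) = -2 / ((2 * (m : ℚ) + 1) * (2 * (m : ℚ) + 2))
        + (4 * (2 * (m : ℚ) + 1) ^ 4 + 8 * (2 * (m : ℚ) + 1) ^ 3 + 3 * (2 * (m : ℚ) + 1) ^ 2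
              - (2 * (m : ℚ) + 1) + 1)
            / ((2 * (m : ℚ) + 1) * (2 * (m : ℚ) + 2) ^ 3) * cc m ^ 2
    ∧ Ss (2 * m + 2) = -2 / ((2 * (m : ℚ) + 2) * (2 * (m : ℚ) + 3))
        + (4 * (m : ℚ) + 5) ^ 2 * (2 * (m : ℚ) + 1) ^ 2
            / ((2 * (m : ℚ) + 2) ^ 3 * (2 * (m : ℚ) + 3)) * cc m ^ 2 := by
  induction m with
  | zero =>
    constructor
    · rw [show 2 * 0 + 1 = 1 from rfl, Ss_one]; norm_num [cc]
    · rw [show 2 * 0 + 2 = 2 from rfl, Ss_two]; norm_num [cc, Nat.choose]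
  | succ m ih =>
    obtain ⟨ih1, ih2⟩ := ih
    have h1 := Srec (2 * m + 1)
    have h2 := Srec (2 * m + 2)
    simp only [show 2 * m + 1 + 1 = 2 * m + 2 from by omega,
      show 2 * m + 1 + 2 = 2 * m + 3 from by omega,
      show 2 * m + 2 + 1 = 2 * m + 3 from by omega,
      show 2 * m + 2 + 2 = 2 * m + 4 from by omega] at h1 h2
    push_cast at h1 h2
    rw [ih1, ih2] at h1
    have crel : cc (m + 1) = cc m * (2 * (m : ℚ) + 1) / (2 * (m : ℚ) + 2) := by
      rw [eq_div_iff (by positivity)]; exact ccrel m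
    have h3 : Ss (2 * m + 3)
        = -2 / ((2 * ((m : ℚ) + 1) + 1) * (2 * ((m : ℚ) + 1) + 2))
            + (4 * (2 * ((m : ℚ) + 1) + 1) ^ 4 + 8 * (2 * ((m : ℚ) + 1) + 1) ^ 3
                  + 3 * (2 * ((m : ℚ) + 1) + 1) ^ 2 - (2 * ((m : ℚ) + 1) + 1) + 1)
                / ((2 * ((m : ℚ) + 1) + 1) * (2 * ((m : ℚ) + 1) + 2) ^ 3) * cc (m + 1) ^ 2 := by
      have hC : ((2 * (m : ℚ) + 1 + 1) * (2 * (m : ℚ) + 1 + 3) ^ 3) ≠ 0 := by positivity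
      rw [crel]
      apply mul_left_cancel₀ hC
      have hx : (2 * (m : ℚ) + 1 + 1) * (2 * (m : ℚ) + 1 + 3) ^ 3 * Ss (2 * m + 3)
          = (2 * (m : ℚ) + 1) ^ 3 * (2 * (m : ℚ) + 1 + 2)
                * (-2 / ((2 * (m : ℚ) + 1) * (2 * (m : ℚ) + 2))
                  + (4 * (2 * (m : ℚ) + 1) ^ 4 + 8 * (2 * (m : ℚ) + 1) ^ 3
                        + 3 * (2 * (m : ℚ) + 1) ^ 2 - (2 * (m : ℚ) + 1) + 1)
                      / ((2 * (m : ℚ) + 1) * (2 * (m : ℚ) + 2) ^ 3) * cc m ^ 2)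
            + (2 * (2 * (m : ℚ) + 1) + 3) * (3 * (2 * (m : ℚ) + 1) ^ 2 + 9 * (2 * (m : ℚ) + 1) + 5)
                * (-2 / ((2 * (m : ℚ) + 2) * (2 * (m : ℚ) + 3))
                  + (4 * (m : ℚ) + 5) ^ 2 * (2 * (m : ℚ) + 1) ^ 2
                      / ((2 * (m : ℚ) + 2) ^ 3 * (2 * (m : ℚ) + 3)) * cc m ^ 2)
            + 2 * (2 * (2 * (m : ℚ) + 1) + 3) := by
        linarith [h1]
      rw [hx]
      have d1 : (2 * (m : ℚ) + 1) ≠ 0 := by positivity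
      have d2 : (2 * (m : ℚ) + 2) ≠ 0 := by positivity
      have d3 : (2 * (m : ℚ) + 3) ≠ 0 := by positivity
      field_simp
      ring
    constructor
    · simpa [show 2 * (m + 1) + 1 = 2 * m + 3 from by omega] using h3
    · rw [h3, ih2] at h2
      have hC : ((2 * (m : ℚ) + 2 + 1) * (2 * (m : ℚ) + 2 + 3) ^ 3) ≠ 0 := by positivity
      have goalcast : ((m : ℚ) + 1) = ((m + 1 : ℕ) : ℚ) := by push_cast; ring
      simp only [show 2 * (m + 1) + 2 = 2 * m + 4 from by omega]
      push_cast
      rw [crel]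
      apply mul_left_cancel₀ hC
      have hx : (2 * (m : ℚ) + 2 + 1) * (2 * (m : ℚ) + 2 + 3) ^ 3 * Ss (2 * m + 4)
          = (2 * (m : ℚ) + 2) ^ 3 * (2 * (m : ℚ) + 2 + 2)
                * (-2 / ((2 * (m : ℚ) + 2) * (2 * (m : ℚ) + 3))
                  + (4 * (m : ℚ) + 5) ^ 2 * (2 * (m : ℚ) + 1) ^ 2
                      / ((2 * (m : ℚ) + 2) ^ 3 * (2 * (m : ℚ) + 3)) * cc m ^ 2)
            + (2 * (2 * (m : ℚ) + 2) + 3) * (3 * (2 * (m : ℚ) + 2) ^ 2 + 9 * (2 * (m : ℚ) + 2) + 5)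
                * (-2 / ((2 * ((m : ℚ) + 1) + 1) * (2 * ((m : ℚ) + 1) + 2))
                  + (4 * (2 * ((m : ℚ) + 1) + 1) ^ 4 + 8 * (2 * ((m : ℚ) + 1) + 1) ^ 3
                        + 3 * (2 * ((m : ℚ) + 1) + 1) ^ 2 - (2 * ((m : ℚ) + 1) + 1) + 1)
                      / ((2 * ((m : ℚ) + 1) + 1) * (2 * ((m : ℚ) + 1) + 2) ^ 3)
                      * (cc m * (2 * (m : ℚ) + 1) / (2 * (m : ℚ) + 2)) ^ 2)
            + 2 * (2 * (2 * (m : ℚ) + 2) + 3) := by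
        rw [crel] at h2
        linarith [h2]
      rw [hx]
      have d1 : (2 * (m : ℚ) + 1) ≠ 0 := by positivity
      have d2 : (2 * (m : ℚ) + 2) ≠ 0 := by positivity
      have d3 : (2 * (m : ℚ) + 3) ≠ 0 := by positivity
      have d4 : (2 * (m : ℚ) + 5) ≠ 0 := by positivity
      field_simp
      ring

theorem id3_odd (n : ℕ) (hn : Odd n) (hn0 : 0 < n) :
    ∑ k ∈ Finset.range (n + 1),
        (Nat.choose n k * Nat.choose (n + k) k * Nat.choose (2 * k) k : ℚ)
          / ((-4) ^ k * (k + 1) ^ 3)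
      = -2 / ((n : ℚ) * (n + 1))
          + ((4 * (n : ℚ) ^ 4 + 8 * (n : ℚ) ^ 3 + 3 * (n : ℚ) ^ 2 - n + 1)
                / ((n : ℚ) * (n + 1) ^ 3))
              * (Nat.choose (n - 1) ((n - 1) / 2) : ℚ) ^ 2 / 16 ^ ((n - 1) / 2) := by
  obtain ⟨m, hm⟩ := hn
  have hm' : n = 2 * m + 1 := by omega
  subst hm'
  have h := (closed_s10 m).1
  have e1 : 2 * m + 1 - 1 = 2 * m := by omega
  have e2 : (2 * m) / 2 = m := by omega
  rw [e1, e2]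
  rw [show (∑ k ∈ Finset.range (2 * m + 1 + 1),
      (Nat.choose (2 * m + 1) k * Nat.choose (2 * m + 1 + k) k * Nat.choose (2 * k) k : ℚ)
        / ((-4) ^ k * (k + 1) ^ 3)) = Ss (2 * m + 1) from rfl]
  rw [h]
  simp only [cc]
  push_cast
  have h16 : (16 : ℚ) ^ m = (4 : ℚ) ^ m * 4 ^ m := by rw [← mul_pow]; norm_num
  have d1 : (2 * (m : ℚ) + 1) ≠ 0 := by positivity
  have d2 : (2 * (m : ℚ) + 2) ≠ 0 := by positivity
  have d4 : ((4 : ℚ)) ^ m ≠ 0 := by positivity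
  rw [h16]
  field_simp
  ring
end

section
/- For every odd positive integer n, the sum over k from 0 to n of k^3 * binomial(n,k)*binomial(n+k,k)*binomial(2k,k) / (-4)^k equals -(n^2*(4n^4+8n^3+3n^2-n+1) / 15) * binomial(n-1,(n-1)/2)^2 / 16^((n-1)/2) (as rational numbers). -/
open Finset Nat

private def tt (n k : ℕ) : ℚ :=
  (k : ℚ) ^ 3 * (Nat.choose n k * Nat.choose (n + k) k * Nat.choose (2 * k) k : ℚ) / (-4) ^ k

private def hh (n k : ℕ) : ℚ :=
  2 * (2 * (n : ℚ) + 3) * (k : ℚ) ^ 3 * ((k : ℚ) - 1) ^ 3 *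
    (Nat.choose (n + 2) k * Nat.choose (n + k) k * Nat.choose (2 * k) k : ℚ) / (-4) ^ k

private def SS (n : ℕ) : ℚ := ∑ k ∈ Finset.range (n + 1), tt n k

private lemma pt_main (k j : ℕ) :
    ((k + j : ℚ) + 1) ^ 4 * tt (k + j + 2) k
      + (2 * (k + j : ℚ) + 3) * (3 * (k + j : ℚ) ^ 2 + 9 * (k + j) + 5) * tt (k + j + 1) k
      - ((k + j : ℚ) + 2) ^ 4 * tt (k + j) k = hh (k + j) k - hh (k + j) (k + 1) := by
  unfold tt hh
  rw [show k + j + 2 + k = k + j + k + 1 + 1 from by omega,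
      show k + j + 1 + k = k + j + k + 1 from by omega,
      show k + j + (k + 1) = k + j + k + 1 from by omega,
      show 2 * (k + 1) = 2 * k + 1 + 1 from by omega]
  rw [Nat.cast_choose ℚ (show k ≤ k + j + 2 by omega),
      Nat.cast_choose ℚ (show k ≤ k + j + k + 1 + 1 by omega),
      Nat.cast_choose ℚ (show k ≤ 2 * k by omega),
      Nat.cast_choose ℚ (show k ≤ k + j + 1 by omega),
      Nat.cast_choose ℚ (show k ≤ k + j + k + 1 by omega),
      Nat.cast_choose ℚ (show k ≤ k + j by omega),
      Nat.cast_choose ℚ (show k ≤ k + j + k by omega),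
      Nat.cast_choose ℚ (show k + 1 ≤ k + j + 2 by omega),
      Nat.cast_choose ℚ (show k + 1 ≤ k + j + k + 1 by omega),
      Nat.cast_choose ℚ (show k + 1 ≤ 2 * k + 1 + 1 by omega)]
  rw [show k + j + 2 - k = j + 1 + 1 from by omega,
      show k + j + k + 1 + 1 - k = k + j + 1 + 1 from by omega,
      show 2 * k - k = k from by omega,
      show k + j + 1 - k = j + 1 from by omega,
      show k + j + k + 1 - k = k + j + 1 from by omega,
      show k + j - k = j from by omega,
      show k + j + k - k = k + j from by omega,
      show k + j + 2 - (k + 1) = j + 1 from by omega,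
      show k + j + k + 1 - (k + 1) = k + j from by omega,
      show 2 * k + 1 + 1 - (k + 1) = k + 1 from by omega]
  simp only [Nat.factorial_succ]
  push_cast
  have hf : ∀ m : ℕ, ((m ! : ℕ) : ℚ) ≠ 0 := fun m => by
    exact_mod_cast (Nat.factorial_pos m).ne'
  have h4 : ((-4 : ℚ)) ^ k ≠ 0 := pow_ne_zero _ (by norm_num)
  have hk1 : ((k : ℚ) + 1) ≠ 0 := by positivity
  have hj1 : ((j : ℚ) + 1) ≠ 0 := by positivity
  have hj2 : ((j : ℚ) + 2) ≠ 0 := by positivity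
  rw [pow_succ]
  field_simp
  ring

private lemma pt_b1 (n : ℕ) :
    ((n : ℚ) + 1) ^ 4 * tt (n + 2) (n + 1)
      + (2 * (n : ℚ) + 3) * (3 * (n : ℚ) ^ 2 + 9 * n + 5) * tt (n + 1) (n + 1)
      - ((n : ℚ) + 2) ^ 4 * tt n (n + 1) = hh n (n + 1) - hh n (n + 2) := by
  unfold tt hh
  rw [show Nat.choose n (n + 1) = 0 from Nat.choose_eq_zero_of_lt (by omega)]
  rw [show n + 2 + (n + 1) = 2 * n + 1 + 1 + 1 from by omega,
      show 2 * (n + 1) = 2 * n + 1 + 1 from by omega,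
      show n + 1 + (n + 1) = 2 * n + 1 + 1 from by omega,
      show n + (n + 1) = 2 * n + 1 from by omega,
      show n + (n + 2) = 2 * n + 1 + 1 from by omega,
      show 2 * (n + 2) = 2 * n + 1 + 1 + 1 + 1 from by omega]
  rw [Nat.choose_self, Nat.choose_self]
  rw [Nat.cast_choose ℚ (show n + 1 ≤ n + 2 by omega),
      Nat.cast_choose ℚ (show n + 1 ≤ 2 * n + 1 + 1 + 1 by omega),
      Nat.cast_choose ℚ (show n + 1 ≤ 2 * n + 1 + 1 by omega),
      Nat.cast_choose ℚ (show n + 1 ≤ 2 * n + 1 by omega),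
      Nat.cast_choose ℚ (show n + 2 ≤ 2 * n + 1 + 1 by omega),
      Nat.cast_choose ℚ (show n + 2 ≤ 2 * n + 1 + 1 + 1 + 1 by omega)]
  rw [show n + 2 - (n + 1) = 1 from by omega,
      show 2 * n + 1 + 1 + 1 - (n + 1) = n + 1 + 1 from by omega,
      show 2 * n + 1 + 1 - (n + 1) = n + 1 from by omega,
      show 2 * n + 1 - (n + 1) = n from by omega,
      show 2 * n + 1 + 1 - (n + 2) = n from by omega,
      show 2 * n + 1 + 1 + 1 + 1 - (n + 2) = n + 1 + 1 from by omega]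
  simp only [Nat.factorial_succ, Nat.factorial_one]
  push_cast
  have hf : ∀ m : ℕ, ((m ! : ℕ) : ℚ) ≠ 0 := fun m => by
    exact_mod_cast (Nat.factorial_pos m).ne'
  have h4 : ((-4 : ℚ)) ^ (n + 1) ≠ 0 := pow_ne_zero _ (by norm_num)
  have hn1 : ((n : ℚ) + 1) ≠ 0 := by positivity
  have hn2 : ((n : ℚ) + 2) ≠ 0 := by positivity
  rw [show n + 2 = (n + 1) + 1 from rfl, pow_succ]
  field_simp
  ring

private lemma pt_b2 (n : ℕ) :
    ((n : ℚ) + 1) ^ 4 * tt (n + 2) (n + 2)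
      + (2 * (n : ℚ) + 3) * (3 * (n : ℚ) ^ 2 + 9 * n + 5) * tt (n + 1) (n + 2)
      - ((n : ℚ) + 2) ^ 4 * tt n (n + 2) = hh n (n + 2) - hh n (n + 3) := by
  unfold tt hh
  rw [show Nat.choose n (n + 2) = 0 from Nat.choose_eq_zero_of_lt (by omega),
      show Nat.choose (n + 1) (n + 2) = 0 from Nat.choose_eq_zero_of_lt (by omega),
      show Nat.choose (n + 2) (n + 3) = 0 from Nat.choose_eq_zero_of_lt (by omega)]
  rw [show n + 2 + (n + 2) = 2 * n + 2 + 1 + 1 from by omega,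
      show 2 * (n + 2) = 2 * n + 2 + 1 + 1 from by omega,
      show n + (n + 2) = 2 * n + 2 from by omega]
  rw [Nat.choose_self]
  rw [Nat.cast_choose ℚ (show n + 2 ≤ 2 * n + 2 + 1 + 1 by omega),
      Nat.cast_choose ℚ (show n + 2 ≤ 2 * n + 2 by omega)]
  rw [show 2 * n + 2 + 1 + 1 - (n + 2) = n + 1 + 1 from by omega,
      show 2 * n + 2 - (n + 2) = n from by omega]
  simp only [Nat.factorial_succ]
  push_cast
  have hf : ∀ m : ℕ, ((m ! : ℕ) : ℚ) ≠ 0 := fun m => by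
    exact_mod_cast (Nat.factorial_pos m).ne'
  have h4 : ((-4 : ℚ)) ^ (n + 2) ≠ 0 := pow_ne_zero _ (by norm_num)
  have hn1 : ((n : ℚ) + 1) ≠ 0 := by positivity
  have hn2 : ((n : ℚ) + 2) ≠ 0 := by positivity
  field_simp
  ring

private lemma ptwise (n k : ℕ) (hk : k ≤ n + 2) :
    ((n : ℚ) + 1) ^ 4 * tt (n + 2) k
      + (2 * (n : ℚ) + 3) * (3 * (n : ℚ) ^ 2 + 9 * n + 5) * tt (n + 1) k
      - ((n : ℚ) + 2) ^ 4 * tt n k = hh n k - hh n (k + 1) := by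
  rcases Nat.lt_or_ge k (n + 1) with h | h
  · obtain ⟨j, rfl⟩ := Nat.exists_eq_add_of_le (Nat.lt_succ_iff.mp h)
    have := pt_main k j
    push_cast at this ⊢
    convert this using 2 <;> push_cast <;> ring
  · rcases Nat.eq_or_lt_of_le h with h1 | h1
    · rw [← h1]
      exact pt_b1 n
    · have h2 : k = n + 2 := by omega
      rw [h2]
      exact pt_b2 n

private lemma tt_zero {n k : ℕ} (h : n < k) : tt n k = 0 := by
  simp [tt, Nat.choose_eq_zero_of_lt h]

private lemma SS_ext (n j : ℕ) : SS n = ∑ k ∈ Finset.range (n + 1 + j), tt n k := by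
  induction j with
  | zero => rfl
  | succ j ih =>
      rw [show n + 1 + (j + 1) = (n + 1 + j) + 1 by ring, Finset.sum_range_succ,
        tt_zero (by omega), add_zero, ih]

private lemma recSS (n : ℕ) :
    ((n : ℚ) + 1) ^ 4 * SS (n + 2)
      + (2 * (n : ℚ) + 3) * (3 * (n : ℚ) ^ 2 + 9 * n + 5) * SS (n + 1)
      - ((n : ℚ) + 2) ^ 4 * SS n = 0 := by
  rw [show SS (n + 2) = ∑ k ∈ Finset.range (n + 3), tt (n + 2) k from SS_ext (n+2) 0,
    show SS (n + 1) = ∑ k ∈ Finset.range (n + 3), tt (n + 1) k from SS_ext (n+1) 1,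
    show SS n = ∑ k ∈ Finset.range (n + 3), tt n k from SS_ext n 2,
    Finset.mul_sum, Finset.mul_sum, Finset.mul_sum, ← Finset.sum_add_distrib,
    ← Finset.sum_sub_distrib]
  have : ∀ k ∈ Finset.range (n + 3),
      ((n : ℚ) + 1) ^ 4 * tt (n + 2) k
        + (2 * (n : ℚ) + 3) * (3 * (n : ℚ) ^ 2 + 9 * n + 5) * tt (n + 1) k
        - ((n : ℚ) + 2) ^ 4 * tt n k = hh n k - hh n (k + 1) := by
    intro k hkr
    exact ptwise n k (by simpa using Nat.lt_succ_iff.mp (Finset.mem_range.mp hkr))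
  rw [Finset.sum_congr rfl this, Finset.sum_range_sub' (hh n)]
  have h0 : hh n 0 = 0 := by simp [hh]
  have h3 : hh n (n + 3) = 0 := by
    simp [hh, Nat.choose_eq_zero_of_lt (show n + 2 < n + 3 by omega)]
  rw [h0, h3, sub_zero]

private def Fo (m : ℕ) : ℚ :=
  -((2 * (m : ℚ) + 1) ^ 2 *
      (4 * (2 * (m : ℚ) + 1) ^ 4 + 8 * (2 * (m : ℚ) + 1) ^ 3 + 3 * (2 * (m : ℚ) + 1) ^ 2
        - (2 * (m : ℚ) + 1) + 1) / 15) * (Nat.choose (2 * m) m : ℚ) ^ 2 / 16 ^ m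

private def Fe (m : ℕ) : ℚ :=
  (2 * (m : ℚ)) ^ 2 * (2 * (m : ℚ) + 1) ^ 2 * (4 * (m : ℚ) + 1) ^ 2 / 15 *
    (Nat.choose (2 * m) m : ℚ) ^ 2 / 16 ^ m

private lemma central_step (m : ℕ) :
    ((m : ℚ) + 1) * (Nat.choose (2 * (m + 1)) (m + 1) : ℚ)
      = 2 * (2 * (m : ℚ) + 1) * (Nat.choose (2 * m) m : ℚ) := by
  have h := Nat.succ_mul_centralBinom_succ m
  simp only [Nat.centralBinom] at h
  exact_mod_cast h

private lemma idA (m : ℕ) :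
    (2 * (m : ℚ) + 2) ^ 4 * Fo (m + 1)
      + (2 * (2 * (m : ℚ) + 1) + 3) * (3 * (2 * (m : ℚ) + 1) ^ 2 + 9 * (2 * (m : ℚ) + 1) + 5) * Fe (m + 1)
      - (2 * (m : ℚ) + 3) ^ 4 * Fo m = 0 := by
  have hc := central_step m
  have hm1 : ((m : ℚ) + 1) ≠ 0 := by positivity
  have hc' : (Nat.choose (2 * (m + 1)) (m + 1) : ℚ)
      = 2 * (2 * (m : ℚ) + 1) * (Nat.choose (2 * m) m : ℚ) / ((m : ℚ) + 1) := by
    field_simp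
    linarith [hc]
  simp only [Fo, Fe, hc']
  have h16 : (16 : ℚ) ^ (m + 1) = 16 * 16 ^ m := by ring
  rw [h16]
  have h16' : (16 : ℚ) ^ m ≠ 0 := by positivity
  push_cast
  field_simp
  ring

private lemma idB (m : ℕ) :
    (2 * (m : ℚ) + 3) ^ 4 * Fe (m + 2)
      + (2 * (2 * (m : ℚ) + 2) + 3) * (3 * (2 * (m : ℚ) + 2) ^ 2 + 9 * (2 * (m : ℚ) + 2) + 5) * Fo (m + 1)
      - (2 * (m : ℚ) + 4) ^ 4 * Fe (m + 1) = 0 := by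
  have hc := central_step (m + 1)
  have hm1 : ((m : ℚ) + 2) ≠ 0 := by positivity
  have hc' : (Nat.choose (2 * (m + 2)) (m + 2) : ℚ)
      = 2 * (2 * ((m : ℚ) + 1) + 1) * (Nat.choose (2 * (m + 1)) (m + 1) : ℚ) / ((m : ℚ) + 2) := by
    push_cast at hc ⊢
    field_simp
    linarith [hc]
  simp only [Fo, Fe, hc']
  have h16 : (16 : ℚ) ^ (m + 2) = 16 * 16 ^ (m + 1) := by ring
  rw [h16]
  have h16' : (16 : ℚ) ^ (m + 1) ≠ 0 := by positivity
  push_cast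
  field_simp
  ring

private lemma main (m : ℕ) : SS (2 * m + 1) = Fo m ∧ SS (2 * m + 2) = Fe (m + 1) := by
  induction m with
  | zero =>
      constructor
      · show SS 1 = Fo 0
        simp [SS, Fo, Finset.sum_range_succ, tt]
        norm_num
      · show SS 2 = Fe 1
        simp [SS, Fe, Finset.sum_range_succ, tt]
        norm_num [Nat.choose]
  | succ m ih =>
      obtain ⟨iho, ihe⟩ := ih
      have r1 := recSS (2 * m + 1)
      have r2 := recSS (2 * m + 2)
      push_cast at r1 r2
      have ho : SS (2 * (m + 1) + 1) = Fo (m + 1) := by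
        have hA := idA m
        have hne : (2 * (m : ℚ) + 2) ^ 4 ≠ 0 := by positivity
        have e1 : (2 * m + 1 + 2) = 2 * (m + 1) + 1 := by ring
        rw [e1, iho, ihe] at r1
        have : (2 * (m : ℚ) + 2) ^ 4 * SS (2 * (m + 1) + 1)
            = (2 * (m : ℚ) + 2) ^ 4 * Fo (m + 1) := by
          nlinarith [r1, hA]
        exact mul_left_cancel₀ hne this
      refine ⟨ho, ?_⟩
      have hB := idB m
      have hne : (2 * (m : ℚ) + 3) ^ 4 ≠ 0 := by positivity
      have e1 : (2 * m + 2 + 2) = 2 * (m + 1) + 2 := by ring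
      have e2 : (2 * m + 2 + 1) = 2 * (m + 1) + 1 := by ring
      rw [e1, e2, ho, ihe] at r2
      have : (2 * (m : ℚ) + 3) ^ 4 * SS (2 * (m + 1) + 2)
          = (2 * (m : ℚ) + 3) ^ 4 * Fe (m + 1 + 1) := by
        nlinarith [r2, hB]
      exact mul_left_cancel₀ hne this

theorem id4_odd (n : ℕ) (hn : Odd n) (hn0 : 0 < n) :
    ∑ k ∈ Finset.range (n + 1),
        (k : ℚ) ^ 3 * (Nat.choose n k * Nat.choose (n + k) k * Nat.choose (2 * k) k : ℚ)
          / (-4) ^ k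
      = -((n : ℚ) ^ 2 * (4 * (n : ℚ) ^ 4 + 8 * (n : ℚ) ^ 3 + 3 * (n : ℚ) ^ 2 - n + 1) / 15)
          * (Nat.choose (n - 1) ((n - 1) / 2) : ℚ) ^ 2 / 16 ^ ((n - 1) / 2) := by
  obtain ⟨m, rfl⟩ := hn
  have h1 : 2 * m + 1 - 1 = 2 * m := by omega
  have h2 : (2 * m) / 2 = m := by omega
  have := (main m).1
  rw [show (∑ k ∈ Finset.range (2 * m + 1 + 1),
        (k : ℚ) ^ 3 * (Nat.choose (2 * m + 1) k * Nat.choose (2 * m + 1 + k) k * Nat.choose (2 * k) k : ℚ)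
          / (-4) ^ k) = SS (2 * m + 1) from rfl, this, h1, h2, Fo]
  push_cast
  ring
end

section
/- Let p > 2 be prime and n = (p-1)/2. For every integer k with 0 <= k <= n, we have binomial(n,k)*binomial(n+k,k)*(-1)^k ≡ binomial(2k,k)^2 / 16^k (mod p^2), where 16^(-k) denotes the inverse of 16^k in Z/p^2. -/
lemma BB_aux (p : ℕ) (hp : p.Prime) (hp2 : 2 < p) (n : ℕ) (hn : n = (p - 1) / 2) :
    ∀ k, k ≤ n →
      (Nat.choose n k : ZMod (p ^ 2)) * (Nat.choose (n + k) k : ZMod (p ^ 2)) * (-1) ^ k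
        * (16 : ZMod (p ^ 2)) ^ k = (Nat.choose (2 * k) k : ZMod (p ^ 2)) ^ 2 := by
  have hodd : Odd p := hp.odd_of_ne_two (by omega)
  have hpn : p = 2 * n + 1 := by
    obtain ⟨m, hm⟩ := hodd
    omega
  have h4 : (4 : ZMod (p ^ 2)) * n * (n + 1) = -1 := by
    have hsq : p ^ 2 = 4 * n * (n + 1) + 1 := by rw [hpn]; ring
    have hnat : 4 * n * (n + 1) = p ^ 2 - 1 := by omega
    have h1 : ((4 * n * (n + 1) : ℕ) : ZMod (p ^ 2)) = ((p ^ 2 - 1 : ℕ) : ZMod (p ^ 2)) := by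
      rw [hnat]
    have hp1 : 1 ≤ p ^ 2 := Nat.one_le_pow _ _ hp.pos
    rw [Nat.cast_sub hp1, ZMod.natCast_self] at h1
    push_cast at h1
    linear_combination h1
  intro k
  induction k with
  | zero => intro _; simp
  | succ k ih =>
    intro hk1
    have hk' : k ≤ n := Nat.le_of_succ_le hk1
    have ihk := ih hk'
    -- (k+1) is a unit
    haveI : NeZero (p ^ 2) := ⟨pow_ne_zero 2 hp.ne_zero⟩
    have hklt : k + 1 < p := by omega
    have hcop : Nat.Coprime (k + 1) (p ^ 2) :=
      Nat.Coprime.pow_right 2 (Nat.Coprime.symm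
        ((Nat.Prime.coprime_iff_not_dvd hp).mpr (Nat.not_dvd_of_pos_of_lt (Nat.succ_pos k) hklt)))
    have hu : IsUnit (((k + 1 : ℕ)) : ZMod (p ^ 2)) :=
      (ZMod.isUnit_iff_coprime (k + 1) (p ^ 2)).mpr hcop
    have hu2 : IsUnit ((((k + 1 : ℕ)) : ZMod (p ^ 2)) ^ 2) := hu.pow 2
    apply hu2.mul_left_cancel
    -- cast identities
    have E1 : (Nat.choose n (k + 1) : ZMod (p ^ 2)) * ((k : ZMod (p ^ 2)) + 1)
        = (Nat.choose n k : ZMod (p ^ 2)) * ((n : ZMod (p ^ 2)) - k) := by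
      have h := Nat.choose_succ_right_eq n k
      have h2 := congrArg (Nat.cast : ℕ → ZMod (p ^ 2)) h
      push_cast [Nat.cast_sub hk'] at h2
      linear_combination h2
    have E2 : ((n : ZMod (p ^ 2)) + k + 1) * (Nat.choose (n + k) k : ZMod (p ^ 2))
        = (Nat.choose (n + k + 1) (k + 1) : ZMod (p ^ 2)) * ((k : ZMod (p ^ 2)) + 1) := by
      have h := Nat.add_one_mul_choose_eq (n + k) k
      have h2 := congrArg (Nat.cast : ℕ → ZMod (p ^ 2)) h
      push_cast at h2
      linear_combination h2
    have E3 : ((k : ZMod (p ^ 2)) + 1) * (Nat.choose (2 * (k + 1)) (k + 1) : ZMod (p ^ 2))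
        = 2 * (2 * k + 1) * (Nat.choose (2 * k) k : ZMod (p ^ 2)) := by
      have h := Nat.succ_mul_centralBinom_succ k
      simp only [Nat.centralBinom] at h
      have h2 := congrArg (Nat.cast : ℕ → ZMod (p ^ 2)) h
      push_cast at h2
      linear_combination h2
    push_cast
    calc ((k : ZMod (p ^ 2)) + 1) ^ 2 * ((Nat.choose n (k + 1) : ZMod (p ^ 2))
            * (Nat.choose (n + (k + 1)) (k + 1) : ZMod (p ^ 2)) * (-1) ^ (k + 1)
            * (16 : ZMod (p ^ 2)) ^ (k + 1))
        = ((Nat.choose n (k + 1) : ZMod (p ^ 2)) * ((k : ZMod (p ^ 2)) + 1))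
            * ((Nat.choose (n + k + 1) (k + 1) : ZMod (p ^ 2)) * ((k : ZMod (p ^ 2)) + 1))
            * (-1) ^ (k + 1) * (16 : ZMod (p ^ 2)) ^ (k + 1) := by
          rw [show n + (k + 1) = n + k + 1 by ring]; ring
      _ = ((Nat.choose n k : ZMod (p ^ 2)) * ((n : ZMod (p ^ 2)) - k))
            * (((n : ZMod (p ^ 2)) + k + 1) * (Nat.choose (n + k) k : ZMod (p ^ 2)))
            * (-1) ^ (k + 1) * (16 : ZMod (p ^ 2)) ^ (k + 1) := by rw [E1, ← E2]
      _ = (-16) * ((n : ZMod (p ^ 2)) - k) * ((n : ZMod (p ^ 2)) + k + 1)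
            * ((Nat.choose n k : ZMod (p ^ 2)) * (Nat.choose (n + k) k : ZMod (p ^ 2))
              * (-1) ^ k * (16 : ZMod (p ^ 2)) ^ k) := by ring
      _ = (-16) * ((n : ZMod (p ^ 2)) - k) * ((n : ZMod (p ^ 2)) + k + 1)
            * (Nat.choose (2 * k) k : ZMod (p ^ 2)) ^ 2 := by rw [ihk]
      _ = (4 * (2 * k + 1) ^ 2) * (Nat.choose (2 * k) k : ZMod (p ^ 2)) ^ 2 := by
          linear_combination (-4 * ((Nat.choose (2 * k) k : ZMod (p ^ 2)) ^ 2)) * h4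
      _ = (((k : ZMod (p ^ 2)) + 1) * (Nat.choose (2 * (k + 1)) (k + 1) : ZMod (p ^ 2))) ^ 2 := by
          rw [E3]; ring
      _ = ((k : ZMod (p ^ 2)) + 1) ^ 2 * (Nat.choose (2 * (k + 1)) (k + 1) : ZMod (p ^ 2)) ^ 2 := by
          ring

theorem BB_cong (p : ℕ) (hp : p.Prime) (hp2 : 2 < p) (n : ℕ) (hn : n = (p - 1) / 2)
    (k : ℕ) (hk : k ≤ n) :
    (Nat.choose n k : ZMod (p ^ 2)) * (Nat.choose (n + k) k : ZMod (p ^ 2)) * (-1) ^ k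
      = (Nat.choose (2 * k) k : ZMod (p ^ 2)) ^ 2 * ((16 : ZMod (p ^ 2)) ^ k)⁻¹ := by
  have key := BB_aux p hp hp2 n hn k hk
  have hcop : Nat.Coprime 16 (p ^ 2) := by
    have h2p : Nat.Coprime 2 p := (Nat.coprime_primes Nat.prime_two hp).mpr (by omega)
    have : Nat.Coprime (2 ^ 4) p := h2p.pow_left 4
    exact (by norm_num : (2:ℕ) ^ 4 = 16) ▸ this.pow_right 2
  have hu16 : IsUnit ((16 : ZMod (p ^ 2))) := by
    have := (ZMod.isUnit_iff_coprime 16 (p ^ 2)).mpr hcop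
    simpa using this
  have huk : IsUnit ((16 : ZMod (p ^ 2)) ^ k) := hu16.pow k
  have hinv := ZMod.mul_inv_of_unit _ huk
  linear_combination (-((Nat.choose n k : ZMod (p ^ 2)) * (Nat.choose (n + k) k : ZMod (p ^ 2))
    * (-1 : ZMod (p ^ 2)) ^ k)) * hinv + ((16 : ZMod (p ^ 2)) ^ k)⁻¹ * key
end

section
/- Let p > 2 be prime and n = (p-1)/2. For every integer k with 0 <= k <= n, the product over j from 1 to k of ((2j-1)^2 - p^2) equals (-1)^k * (2k)! * binomial(n,k) * binomial(n+k,k) * 4^k / binomial(2k,k) (as an identity of rational numbers, equivalently binomial(n,k)*binomial(n+k,k)*(-1)^k = binomial(2k,k) * (prod_{j=1}^k ((2j-1)^2 - p^2)) / (4^k * (2k)!)). -/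
lemma BB_aux_s14 (n : ℕ) (k : ℕ) (hk : k ≤ n) :
    ∏ j ∈ Finset.Icc 1 k, ((2 * (j : ℚ) - 1) ^ 2 - (2 * (n : ℚ) + 1) ^ 2)
      = (-4) ^ k * ((Nat.factorial n : ℚ) / (Nat.factorial (n - k) : ℚ))
          * ((Nat.factorial (n + k) : ℚ) / (Nat.factorial n : ℚ)) := by
  induction k with
  | zero => field_simp; simp
  | succ k ih =>
    have hk' : k ≤ n := Nat.le_of_succ_le hk
    rw [Finset.prod_Icc_succ_top (by omega : 1 ≤ k + 1), ih hk']
    have h1 : n - k = (n - (k + 1)) + 1 := by omega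
    have h2 : n + (k + 1) = (n + k) + 1 := by omega
    have hcast : ((n - k : ℕ) : ℚ) = (n : ℚ) - (k : ℚ) := by
      push_cast [Nat.cast_sub hk']; ring
    rw [h1, h2, Nat.factorial_succ, Nat.factorial_succ]
    have hnk : ((n - (k+1)).factorial : ℚ) ≠ 0 := Nat.cast_ne_zero.mpr (Nat.factorial_ne_zero _)
    have hn0 : ((n).factorial : ℚ) ≠ 0 := Nat.cast_ne_zero.mpr (Nat.factorial_ne_zero _)
    have h3 : ((n - (k+1) + 1 : ℕ) : ℚ) = (n : ℚ) - (k : ℚ) := by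
      rw [← h1, hcast]
    have hne : (n : ℚ) - (k : ℚ) ≠ 0 := by
      have : (k : ℚ) < (n : ℚ) := by exact_mod_cast (by omega : k < n)
      intro h; linarith
    push_cast [h3]
    field_simp
    ring

theorem BB_identity (p : ℕ) (hp : p.Prime) (hp2 : 2 < p) (n : ℕ) (hn : n = (p - 1) / 2)
    (k : ℕ) (hk : k ≤ n) :
    ∏ j ∈ Finset.Icc 1 k, ((2 * (j : ℚ) - 1) ^ 2 - (p : ℚ) ^ 2)
      = (-1) ^ k * (Nat.factorial (2 * k) : ℚ) * (Nat.choose n k : ℚ)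
          * (Nat.choose (n + k) k : ℚ) * 4 ^ k / (Nat.choose (2 * k) k : ℚ) := by
  have hodd : p % 2 = 1 := Nat.Prime.eq_two_or_odd hp |>.resolve_left (by omega)
  have hpn : p = 2 * n + 1 := by omega
  have hpq : (p : ℚ) = 2 * (n : ℚ) + 1 := by rw [hpn]; push_cast; ring
  rw [hpq, BB_aux_s14 n k hk]
  rw [Nat.cast_choose ℚ hk, Nat.cast_choose ℚ (Nat.le_add_left k n),
    Nat.cast_choose ℚ (by omega : k ≤ 2 * k)]
  have e1 : n + k - k = n := by omega
  have e2 : 2 * k - k = k := by omega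
  rw [e1, e2]
  have f1 : ((n - k).factorial : ℚ) ≠ 0 := Nat.cast_ne_zero.mpr (Nat.factorial_ne_zero _)
  have f2 : ((n).factorial : ℚ) ≠ 0 := Nat.cast_ne_zero.mpr (Nat.factorial_ne_zero _)
  have f3 : ((k).factorial : ℚ) ≠ 0 := Nat.cast_ne_zero.mpr (Nat.factorial_ne_zero _)
  have f4 : (((2*k)).factorial : ℚ) ≠ 0 := Nat.cast_ne_zero.mpr (Nat.factorial_ne_zero _)
  have f5 : ((n + k).factorial : ℚ) ≠ 0 := Nat.cast_ne_zero.mpr (Nat.factorial_ne_zero _)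
  have h4 : ((-4 : ℚ)) ^ k = (-1) ^ k * 4 ^ k := by
    rw [← neg_one_mul, mul_pow]
  rw [h4]
  field_simp
end

section
/- Let p > 2 be prime and n = (p-1)/2. For every integer k with 0 <= k <= n, binomial(n,k)*binomial(n+k,k)*(-1)^k ≡ (binomial(2k,k)^2 / 16^k) * (1 - p^2 * sum over j from 1 to k of 1/(2j-1)^2) (mod p^3), where divisions denote inverses modulo p^3. -/
private lemma unit_cast (p : ℕ) (hp : p.Prime) (m : ℕ) (h : ¬ p ∣ m) :
    IsUnit ((m : ℕ) : ZMod (p ^ 3)) := by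
  rw [ZMod.isUnit_iff_coprime]
  exact Nat.Coprime.pow_right 3 (Nat.coprime_comm.mp (hp.coprime_iff_not_dvd.mpr h))

private lemma aux_key (p : ℕ) (hp : p.Prime) (hp2 : 2 < p) (n : ℕ) (hn : n = (p - 1) / 2) :
    ∀ k, k ≤ n →
      (16 : ZMod (p ^ 3)) ^ k *
          ((Nat.choose n k : ZMod (p ^ 3)) * (Nat.choose (n + k) k : ZMod (p ^ 3)) * (-1) ^ k)
        = (Nat.choose (2 * k) k : ZMod (p ^ 3)) ^ 2 *
            (1 - (p : ZMod (p ^ 3)) ^ 2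
              * ∑ j ∈ Finset.Icc 1 k, (((2 * j - 1 : ℕ) : ZMod (p ^ 3)) ^ 2)⁻¹) := by
  have hodd : p % 2 = 1 := by
    rcases hp.eq_two_or_odd with h | h
    · omega
    · exact h
  have h2n : 2 * n + 1 = p := by omega
  intro k
  induction k with
  | zero => simp
  | succ k ih =>
    intro hk1
    have hk : k ≤ n := Nat.le_of_succ_le hk1
    have ih' := ih hk
    set R := ZMod (p ^ 3) with hR
    set P : R := (p : R) with hP
    have hp3 : P ^ 3 = 0 := by
      rw [hP, ← Nat.cast_pow, ZMod.natCast_self]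
    have h2nR : 2 * (n : R) = P - 1 := by
      have h : ((2 * n + 1 : ℕ) : R) = P := by rw [h2n]
      push_cast [Nat.cast_mul (α := R)] at h
      linear_combination h
    have hu2 : IsUnit ((2 * k + 1 : ℕ) : R) := by
      apply unit_cast p hp
      intro hd
      have := Nat.le_of_dvd (by omega) hd
      omega
    have hinv : (((2 * (k + 1) - 1 : ℕ) : R) ^ 2) * ((((2 * (k + 1) - 1 : ℕ) : R) ^ 2)⁻¹) = 1 := by
      apply ZMod.mul_inv_of_unit
      have h : (2 * (k + 1) - 1 : ℕ) = 2 * k + 1 := by omega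
      rw [h]
      exact hu2.pow 2
    -- ℕ recurrences
    have e1 : ((Nat.choose n (k + 1) * (k + 1) : ℕ) : R)
        = ((Nat.choose n k * (n - k) : ℕ) : R) := by
      rw [Nat.choose_succ_right_eq]
    have e2 : (((n + k + 1) * Nat.choose (n + k) k : ℕ) : R)
        = ((Nat.choose (n + k + 1) (k + 1) * (k + 1) : ℕ) : R) := by
      rw [Nat.add_one_mul_choose_eq]
    have e3n : (k + 1) * Nat.choose (2 * (k + 1)) (k + 1)
        = 2 * (2 * k + 1) * Nat.choose (2 * k) k := by
      simpa [Nat.centralBinom] using Nat.succ_mul_centralBinom_succ k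
    have e3 : (((k + 1) * Nat.choose (2 * (k + 1)) (k + 1) : ℕ) : R)
        = ((2 * (2 * k + 1) * Nat.choose (2 * k) k : ℕ) : R) := by rw [e3n]
    have hcast : ((n - k : ℕ) : R) = (n : R) - (k : R) := by
      exact_mod_cast Nat.cast_sub hk
    push_cast [hcast, Nat.cast_mul (α := R)] at e1 e2 e3
    -- split the sum
    rw [Finset.sum_Icc_succ_top (by omega : 1 ≤ k + 1)]
    -- multiply both sides by the unit ((k+1) : R)^2
    have hu1 : IsUnit ((k + 1 : ℕ) : R) := by
      apply unit_cast p hp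
      intro hd
      have := Nat.le_of_dvd (by omega) hd
      omega
    have hu : IsUnit (((k + 1 : ℕ) : R) ^ 2) := hu1.pow 2
    apply hu.mul_left_cancel
    push_cast
    simp only [← add_assoc]
    set c1 : R := (Nat.choose n k : R) with hc1
    set c2 : R := (Nat.choose (n + k) k : R) with hc2
    set c3 : R := (Nat.choose n (k + 1) : R) with hc3
    set c4 : R := (Nat.choose (n + k + 1) (k + 1) : R) with hc4
    set d : R := (Nat.choose (2 * k) k : R) with hd
    set d' : R := (Nat.choose (2 * (k + 1)) (k + 1) : R) with hd'
    set s : R := ∑ j ∈ Finset.Icc 1 k, (((2 * j - 1 : ℕ) : R) ^ 2)⁻¹ with hs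
    set t : R := (((2 * (k + 1) - 1 : ℕ) : R) ^ 2)⁻¹ with ht
    have hcast2 : ((2 * (k + 1) - 1 : ℕ) : R) = 2 * (k : R) + 1 := by
      have h : (2 * (k + 1) - 1 : ℕ) = 2 * k + 1 := by omega
      rw [h]; push_cast [Nat.cast_mul (α := R)]; ring
    rw [hcast2] at hinv
    -- key algebraic identity from 2n = p - 1
    have hB : (16 : R) * (((n : R) - k) * ((n : R) + k + 1)) * (-1)
        = 4 * (2 * (k : R) + 1) ^ 2 - 4 * P ^ 2 := by
      linear_combination (-4 * (2 * (n : R) + P + 1)) * h2nR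
    linear_combination
      ((16 : R) ^ k * 16 * ((-1) ^ k * (-1)) * (c4 * ((k : R) + 1))) * e1
      - ((16 : R) ^ k * 16 * ((-1) ^ k * (-1)) * c1 * ((n : R) - (k : R))) * e2
      + ((16 : R) ^ k * (-1) ^ k * c1 * c2) * hB
      + (4 * (2 * (k : R) + 1) ^ 2 - 4 * P ^ 2) * ih'
      - ((((k : R) + 1) * d' + 2 * (2 * (k : R) + 1) * d) * (1 - P ^ 2 * (s + t))) * e3
      + (4 * d ^ 2 * P ^ 2) * hinv
      + (4 * P * d ^ 2 * s) * hp3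

theorem BB_plus (p : ℕ) (hp : p.Prime) (hp2 : 2 < p) (n : ℕ) (hn : n = (p - 1) / 2)
    (k : ℕ) (hk : k ≤ n) :
    (Nat.choose n k : ZMod (p ^ 3)) * (Nat.choose (n + k) k : ZMod (p ^ 3)) * (-1) ^ k
      = (Nat.choose (2 * k) k : ZMod (p ^ 3)) ^ 2 * ((16 : ZMod (p ^ 3)) ^ k)⁻¹
          * (1 - (p : ZMod (p ^ 3)) ^ 2
              * ∑ j ∈ Finset.Icc 1 k, (((2 * j - 1 : ℕ) : ZMod (p ^ 3)) ^ 2)⁻¹) := by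
  have key := aux_key p hp hp2 n hn k hk
  have h16' : ¬ p ∣ 16 := by
    intro h
    have h2 : p ∣ 2 := hp.dvd_of_dvd_pow (show p ∣ 2 ^ 4 by norm_num; exact h)
    have := Nat.le_of_dvd (by norm_num) h2
    omega
  have h16 : IsUnit (16 : ZMod (p ^ 3)) := by
    have := unit_cast p hp 16 h16'
    simpa using this
  have hcancel : (16 : ZMod (p ^ 3)) ^ k * ((16 : ZMod (p ^ 3)) ^ k)⁻¹ = 1 :=
    ZMod.mul_inv_of_unit _ (h16.pow k)
  linear_combination ((16 : ZMod (p ^ 3)) ^ k)⁻¹ * key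
    - ((Nat.choose n k : ZMod (p ^ 3)) * (Nat.choose (n + k) k : ZMod (p ^ 3)) * (-1) ^ k) * hcancel
end
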